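/- arXiv:2501.06883 — 5 statements merged into one kernel-verified Lean document; each statement's English description precedes it below -/
import Mathlib

section
/- Let p be a prime, r ≥ 1 an integer, and let g(x) ∈ ℚ[x] be a polynomial of degree e ≥ 1 with g(0) ≠ 0 whose Newton polygon NP_p(g) has successive vertices (x_0, y_0), (x_1, y_1), …, (x_t, y_t) (so NP_p(g) consists of t segments with strictly increasing slopes λ_s = (y_s − y_{s−1})/(x_s − x_{s−1})). Suppose f(x) ∈ ℚ[x] is a p^r-pure polynomial of degree d and that |λ_s| < r for all 1 ≤ s ≤ t. Then the Newton polygon NP_p(g ∘ f) has successive vertices (d·x_0, y_0), (d·x_1, y_1), …, (d·x_t, y_t); in particular it has t segments with slopes λ_1/d < ⋯ < λ_t/d. -/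
open Polynomial Finset

/-- The `n`-th compositional iterate of `f`: `f^0 = X`, `f^{n+1} = f ∘ f^n`. -/
noncomputable def polyIter (f : Polynomial ℚ) : ℕ → Polynomial ℚ
  | 0 => Polynomial.X
  | n + 1 => f.comp (polyIter f n)

/-- The `p`-adic valuation of a rational number, viewed as a rational number. -/
def nuQ (p : ℕ) (x : ℚ) : ℚ := (padicValRat p x : ℚ)

/-- `NP_p(h)` has successive vertices `(xs 0, ys 0), …, (xs t, ys t)`:
the corresponding coefficients are nonzero and have the prescribed valuations,
the slopes are strictly increasing, and every point of the Newton diagram lies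
on or above the polygon. -/
def HasNPVertices (p : ℕ) (h : Polynomial ℚ) (t : ℕ) (xs : ℕ → ℕ) (ys : ℕ → ℚ) : Prop :=
  h.coeff 0 ≠ 0 ∧
  xs 0 = 0 ∧ xs t = h.natDegree ∧
  (∀ s, s < t → xs s < xs (s + 1)) ∧
  (∀ s, s ≤ t → h.coeff (h.natDegree - xs s) ≠ 0 ∧
      nuQ p (h.coeff (h.natDegree - xs s)) = ys s) ∧
  (∀ s, 1 ≤ s → s < t →
      (ys s - ys (s - 1)) / ((xs s : ℚ) - (xs (s - 1) : ℚ)) <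
        (ys (s + 1) - ys s) / ((xs (s + 1) : ℚ) - (xs s : ℚ))) ∧
  (∀ s, 1 ≤ s → s ≤ t → ∀ i, h.coeff i ≠ 0 →
      xs (s - 1) ≤ h.natDegree - i → h.natDegree - i ≤ xs s →
      ys (s - 1) + ((ys s - ys (s - 1)) / ((xs s : ℚ) - (xs (s - 1) : ℚ))) *
          (((h.natDegree - i : ℕ) : ℚ) - (xs (s - 1) : ℚ)) ≤ nuQ p (h.coeff i))

/-- The number of irreducible factors of a polynomial over `ℚ`,
counted with multiplicity. -/
noncomputable def numFactors (P : Polynomial ℚ) : ℕ :=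
  (UniqueFactorizationMonoid.factors P).card

/-- `f` is `p^r`-pure. -/
def IsPpure (p r : ℕ) (f : Polynomial ℚ) : Prop :=
  f.coeff 0 ≠ 0 ∧
  padicValRat p f.leadingCoeff = 0 ∧
  padicValRat p (f.coeff 0) = (r : ℤ) ∧
  ∀ i, 0 < i → i < f.natDegree → f.coeff i ≠ 0 →
    (r : ℚ) / (f.natDegree : ℚ) ≤ nuQ p (f.coeff i) / ((f.natDegree : ℚ) - (i : ℚ))

/-! ### Auxiliary lemmas -/

section Val
variable {p : ℕ} [Fact p.Prime]

lemma val_sum_ge {ι : Type*} (s : Finset ι) (F : ι → ℚ) (c : ℚ)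
    (h : ∀ i ∈ s, F i ≠ 0 → c ≤ (padicValRat p (F i) : ℚ))
    (hs : ∑ i ∈ s, F i ≠ 0) :
    c ≤ (padicValRat p (∑ i ∈ s, F i) : ℚ) := by
  induction s using Finset.cons_induction with
  | empty => simp at hs
  | cons a s ha ih =>
    rw [Finset.sum_cons] at hs ⊢
    by_cases h0 : ∑ i ∈ s, F i = 0
    · rw [h0, add_zero] at hs ⊢
      exact h a (Finset.mem_cons_self a s) hs
    by_cases hFa : F a = 0
    · rw [hFa, zero_add] at hs ⊢
      exact ih (fun i hi => h i (Finset.mem_cons_of_mem hi)) h0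
    · have hmin := padicValRat.min_le_padicValRat_add (p := p) hs
      have h1 := h a (Finset.mem_cons_self a s) hFa
      have h2 := ih (fun i hi => h i (Finset.mem_cons_of_mem hi)) h0
      have : c ≤ ((min (padicValRat p (F a)) (padicValRat p (∑ i ∈ s, F i)) : ℤ) : ℚ) := by
        push_cast
        exact le_min h1 h2
      exact this.trans (by exact_mod_cast hmin)

lemma val_sum_gt {ι : Type*} (s : Finset ι) (F : ι → ℚ) (c : ℚ)
    (h : ∀ i ∈ s, F i ≠ 0 → c < (padicValRat p (F i) : ℚ))
    (hs : ∑ i ∈ s, F i ≠ 0) :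
    c < (padicValRat p (∑ i ∈ s, F i) : ℚ) := by
  induction s using Finset.cons_induction with
  | empty => simp at hs
  | cons a s ha ih =>
    rw [Finset.sum_cons] at hs ⊢
    by_cases h0 : ∑ i ∈ s, F i = 0
    · rw [h0, add_zero] at hs ⊢
      exact h a (Finset.mem_cons_self a s) hs
    by_cases hFa : F a = 0
    · rw [hFa, zero_add] at hs ⊢
      exact ih (fun i hi => h i (Finset.mem_cons_of_mem hi)) h0
    · have hmin := padicValRat.min_le_padicValRat_add (p := p) hs
      have h1 := h a (Finset.mem_cons_self a s) hFa
      have h2 := ih (fun i hi => h i (Finset.mem_cons_of_mem hi)) h0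
      have : c < ((min (padicValRat p (F a)) (padicValRat p (∑ i ∈ s, F i)) : ℤ) : ℚ) := by
        push_cast
        exact lt_min h1 h2
      exact this.trans_le (by exact_mod_cast hmin)

lemma val_sum_eq {ι : Type*} [DecidableEq ι] (s : Finset ι) (F : ι → ℚ) (a : ι)
    (has : a ∈ s) (hFa : F a ≠ 0)
    (h : ∀ i ∈ s, i ≠ a → F i ≠ 0 →
      (padicValRat p (F a) : ℚ) < (padicValRat p (F i) : ℚ)) :
    (∑ i ∈ s, F i) ≠ 0 ∧ padicValRat p (∑ i ∈ s, F i) = padicValRat p (F a) := by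
  rw [← Finset.add_sum_erase _ _ has]
  by_cases hR : ∑ i ∈ s.erase a, F i = 0
  · rw [hR, add_zero]; exact ⟨hFa, rfl⟩
  · have hRv : (padicValRat p (F a) : ℚ) < (padicValRat p (∑ i ∈ s.erase a, F i) : ℚ) :=
      val_sum_gt _ _ _ (fun i hi hne =>
        h i (Finset.mem_of_mem_erase hi) (Finset.ne_of_mem_erase hi) hne) hR
    have hRv' : padicValRat p (F a) < padicValRat p (∑ i ∈ s.erase a, F i) := by
      exact_mod_cast hRv
    have hne : F a + ∑ i ∈ s.erase a, F i ≠ 0 := by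
      intro hz
      have : ∑ i ∈ s.erase a, F i = -F a := by linarith [hz]
      rw [this, padicValRat.neg] at hRv'
      exact lt_irrefl _ hRv'
    exact ⟨hne, padicValRat.add_eq_of_lt hne hFa hR hRv'⟩

lemma pure_coeff_bound {r : ℕ} {f : Polynomial ℚ} {d : ℕ} (hd : f.natDegree = d)
    (hd1 : 1 ≤ d) (hpure : IsPpure p r f) :
    ∀ i, f.coeff i ≠ 0 → (r : ℚ) * ((d : ℚ) - i) / d ≤ (padicValRat p (f.coeff i) : ℚ) := by
  intro i hi
  have hdq : (0:ℚ) < (d:ℚ) := by exact_mod_cast hd1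
  have hid : i ≤ d := hd ▸ le_natDegree_of_ne_zero hi
  rcases Nat.eq_zero_or_pos i with rfl | hi0
  · rw [hpure.2.2.1]
    push_cast
    rw [sub_zero, mul_div_assoc, div_self hdq.ne', mul_one]
  rcases eq_or_lt_of_le hid with rfl | hilt
  · have : f.coeff i = f.leadingCoeff := by rw [Polynomial.leadingCoeff, hd]
    rw [this, hpure.2.1]
    push_cast
    rw [sub_self, mul_zero, zero_div]
  · have hb := hpure.2.2.2 i hi0 (hd ▸ hilt) hi
    rw [hd] at hb
    unfold nuQ at hb
    have hdi : (0:ℚ) < (d:ℚ) - i := by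
      have : (i:ℚ) < d := by exact_mod_cast hilt
      linarith
    rw [div_le_div_iff₀ hdq hdi] at hb
    rw [div_le_iff₀ hdq]
    linarith

lemma pure_pow_bound {r : ℕ} {f : Polynomial ℚ} {d : ℕ} (hd : f.natDegree = d)
    (hd1 : 1 ≤ d) (hpure : IsPpure p r f) :
    ∀ (j i : ℕ), (f ^ j).coeff i ≠ 0 →
      (r : ℚ) * ((d : ℚ) * j - i) / d ≤ (padicValRat p ((f ^ j).coeff i) : ℚ) := by
  have hdq : (0:ℚ) < (d:ℚ) := by exact_mod_cast hd1
  intro j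
  induction j with
  | zero =>
    intro i hi
    rw [pow_zero] at hi ⊢
    rw [Polynomial.coeff_one] at hi ⊢
    rcases eq_or_ne i 0 with rfl | h0
    · simp
    · simp [h0] at hi
  | succ j ih =>
    intro i hi
    rw [pow_succ'] at hi ⊢
    rw [Polynomial.coeff_mul] at hi ⊢
    refine val_sum_ge _ _ _ ?_ hi
    rintro ⟨a, b⟩ hab hne
    have habs : a + b = i := Finset.HasAntidiagonal.mem_antidiagonal.mp hab
    have ha : f.coeff a ≠ 0 := fun h => hne (by simp [h])
    have hb : (f ^ j).coeff b ≠ 0 := fun h => hne (by simp [h])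
    rw [padicValRat.mul ha hb]
    push_cast
    have h1 := pure_coeff_bound hd hd1 hpure a ha
    have h2 := ih b hb
    have habq : (a:ℚ) + b = i := by exact_mod_cast habs
    have key : (r : ℚ) * ((d : ℚ) * (j + 1) - i) / d
        = (r : ℚ) * ((d : ℚ) - a) / d + (r : ℚ) * ((d : ℚ) * j - b) / d := by
      field_simp
      linear_combination (r:ℚ) * habq
    rw [key]
    exact add_le_add h1 h2

end Val

/-! ### Newton polygon geometry -/

noncomputable def lamF (xs : ℕ → ℕ) (ys : ℕ → ℚ) (s : ℕ) : ℚ :=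
  (ys s - ys (s - 1)) / ((xs s : ℚ) - (xs (s - 1) : ℚ))

noncomputable def ellF (xs : ℕ → ℕ) (ys : ℕ → ℚ) (s : ℕ) (u : ℚ) : ℚ :=
  ys (s - 1) + lamF xs ys s * (u - (xs (s - 1) : ℚ))

lemma lin_le {A B u1 u2 u : ℚ} (h1 : u1 ≤ u) (h2 : u ≤ u2)
    (e1 : 0 ≤ A + B * u1) (e2 : 0 ≤ A + B * u2) : 0 ≤ A + B * u := by
  rcases le_total 0 B with hB | hB
  · nlinarith
  · nlinarith

section Polygon

variable {t : ℕ} {xs : ℕ → ℕ} {ys : ℕ → ℚ}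

lemma xs_lt (hx : ∀ s, s < t → xs s < xs (s + 1)) :
    ∀ b, b ≤ t → ∀ a, a < b → xs a < xs b := by
  intro b
  induction b with
  | zero => intro _ a ha; omega
  | succ n ih =>
    intro hbt a ha
    rcases Nat.lt_succ_iff_lt_or_eq.mp ha with h | rfl
    · exact (ih (by omega) a h).trans (hx n (by omega))
    · exact hx a (by omega)

lemma lam_mono (hinc : ∀ s, 1 ≤ s → s < t → lamF xs ys s < lamF xs ys (s + 1)) :
    ∀ s s', 1 ≤ s → s ≤ s' → s' ≤ t → lamF xs ys s ≤ lamF xs ys s' := by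
  intro s s' hs1 hss'
  induction s', hss' using Nat.le_induction with
  | base => intro _; exact le_refl _
  | succ n hn ih =>
    intro hnt
    exact (ih (by omega)).trans (hinc n (by omega) (by omega)).le

lemma chord (hx : ∀ s, s < t → xs s < xs (s + 1)) {m : ℕ} (hm1 : 1 ≤ m) (hmt : m ≤ t) :
    lamF xs ys m * ((xs m : ℚ) - (xs (m - 1) : ℚ)) = ys m - ys (m - 1) := by
  have h := xs_lt hx m hmt (m - 1) (by omega)
  have hne : (xs m : ℚ) - (xs (m - 1) : ℚ) ≠ 0 := by
    have : (xs (m - 1) : ℚ) < xs m := by exact_mod_cast h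
    linarith
  rw [lamF, div_mul_cancel₀ _ hne]

lemma vertex_above (hx : ∀ s, s < t → xs s < xs (s + 1))
    (hinc : ∀ s, 1 ≤ s → s < t → lamF xs ys s < lamF xs ys (s + 1))
    {s : ℕ} (hs1 : 1 ≤ s) (hst : s ≤ t) :
    ∀ m, m ≤ t → ellF xs ys s (xs m) ≤ ys m := by
  have base : ellF xs ys s (xs (s - 1)) = ys (s - 1) := by
    rw [ellF]; ring
  have up : ∀ k, s - 1 + k ≤ t → ellF xs ys s (xs (s - 1 + k)) ≤ ys (s - 1 + k) := by
    intro k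
    induction k with
    | zero => intro _; simpa using base.le
    | succ n ih =>
      intro hkt
      set m := s - 1 + n with hm
      have hmt : m + 1 ≤ t := by omega
      have hch := chord (ys := ys) hx (m := m + 1) (by omega) hmt
      simp only [Nat.add_sub_cancel] at hch
      have hΔ : (0:ℚ) ≤ (xs (m + 1) : ℚ) - (xs m : ℚ) := by
        have := xs_lt hx (m + 1) hmt m (by omega)
        have : (xs m : ℚ) < xs (m + 1) := by exact_mod_cast this
        linarith
      have hlam : lamF xs ys s ≤ lamF xs ys (m + 1) :=
        lam_mono hinc s (m + 1) hs1 (by omega) hmt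
      have hih := ih (by omega)
      have hexp : ellF xs ys s (xs (m + 1)) =
          ellF xs ys s (xs m) + lamF xs ys s * ((xs (m + 1) : ℚ) - (xs m : ℚ)) := by
        rw [ellF, ellF]; ring
      have : s - 1 + (n + 1) = m + 1 := by omega
      rw [this, hexp]
      have hmul : lamF xs ys s * ((xs (m + 1) : ℚ) - (xs m : ℚ))
          ≤ lamF xs ys (m + 1) * ((xs (m + 1) : ℚ) - (xs m : ℚ)) :=
        mul_le_mul_of_nonneg_right hlam hΔ
      rw [hch] at hmul
      linarith
  have down : ∀ k, k ≤ s - 1 → ellF xs ys s (xs (s - 1 - k)) ≤ ys (s - 1 - k) := by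
    intro k
    induction k with
    | zero => intro _; simpa using base.le
    | succ n ih =>
      intro hks
      set m := s - 1 - (n + 1) with hm
      have hm1 : m + 1 = s - 1 - n := by omega
      have hmt : m + 1 ≤ t := by omega
      have hch := chord (ys := ys) hx (m := m + 1) (by omega) hmt
      simp only [Nat.add_sub_cancel] at hch
      have hΔ : (0:ℚ) ≤ (xs (m + 1) : ℚ) - (xs m : ℚ) := by
        have := xs_lt hx (m + 1) hmt m (by omega)
        have : (xs m : ℚ) < xs (m + 1) := by exact_mod_cast this
        linarith
      have hlam : lamF xs ys (m + 1) ≤ lamF xs ys s :=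
        lam_mono hinc (m + 1) s (by omega) (by omega) hst
      have hih := ih (by omega)
      rw [← hm1] at hih
      have hexp : ellF xs ys s (xs m) =
          ellF xs ys s (xs (m + 1)) - lamF xs ys s * ((xs (m + 1) : ℚ) - (xs m : ℚ)) := by
        rw [ellF, ellF]; ring
      rw [hexp]
      have hmul : lamF xs ys (m + 1) * ((xs (m + 1) : ℚ) - (xs m : ℚ))
          ≤ lamF xs ys s * ((xs (m + 1) : ℚ) - (xs m : ℚ)) :=
        mul_le_mul_of_nonneg_right hlam hΔ
      rw [hch] at hmul
      linarith
  intro m hmt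
  rcases le_total (s - 1) m with h | h
  · have := up (m - (s - 1)) (by omega)
    rwa [Nat.add_sub_cancel' h] at this
  · have := down (s - 1 - m) (by omega)
    have heq : s - 1 - (s - 1 - m) = m := by omega
    rwa [heq] at this

lemma exists_seg (ht : 1 ≤ t) (hx0 : xs 0 = 0)
    (u : ℕ) (hu : u ≤ xs t) :
    ∃ s', 1 ≤ s' ∧ s' ≤ t ∧ xs (s' - 1) ≤ u ∧ u ≤ xs s' := by
  classical
  have hex : ∃ m, u ≤ xs m := ⟨t, hu⟩
  have hm0 : u ≤ xs (Nat.find hex) := Nat.find_spec hex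
  have hm0t : Nat.find hex ≤ t := Nat.find_le hu
  rcases Nat.eq_zero_or_pos (Nat.find hex) with h0 | h1
  · rw [h0, hx0] at hm0
    refine ⟨1, le_refl 1, ht, ?_, ?_⟩
    · simpa [hx0] using Nat.zero_le u
    · omega
  · have hmin : ¬ u ≤ xs (Nat.find hex - 1) := Nat.find_min hex (by omega)
    exact ⟨Nat.find hex, h1, hm0t, le_of_not_ge hmin, hm0⟩

end Polygon

set_option maxHeartbeats 1000000 in
/-- Corollary 1.8 (Gajek-Leonard–Tomer): composing with a `p^r`-pure polynomial
stretches the Newton polygon horizontally by the degree, provided all slopes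
have absolute value less than `r`. -/
theorem newton_polygon_comp_pure
    (p r : ℕ) (hp : p.Prime) (hr : 1 ≤ r)
    (g f : Polynomial ℚ) (e d t : ℕ)
    (hge : g.natDegree = e) (he1 : 1 ≤ e)
    (hg0 : g.coeff 0 ≠ 0)
    (xs : ℕ → ℕ) (ys : ℕ → ℚ)
    (hNPg : HasNPVertices p g t xs ys)
    (hfd : f.natDegree = d)
    (hpure : IsPpure p r f)
    (hslope : ∀ s, 1 ≤ s → s ≤ t →
      |(ys s - ys (s - 1)) / ((xs s : ℚ) - (xs (s - 1) : ℚ))| < (r : ℚ)) :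
    HasNPVertices p (g.comp f) t (fun s => d * xs s) ys := by
  haveI : Fact p.Prime := ⟨hp⟩
  obtain ⟨hg0', hx0, hxt, hx, hvert, hinc0, hbound⟩ := hNPg
  rw [hge] at hxt hvert hbound
  have hinc : ∀ s, 1 ≤ s → s < t → lamF xs ys s < lamF xs ys (s + 1) := hinc0
  have hslope' : ∀ s, 1 ≤ s → s ≤ t → lamF xs ys s < (r : ℚ) :=
    fun s h1 h2 => (le_abs_self _).trans_lt (hslope s h1 h2)
  have hf0 : f.coeff 0 ≠ 0 := hpure.1
  have hfne : f ≠ 0 := fun h => hf0 (by simp [h])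
  have hd1 : 1 ≤ d := by
    by_contra hcon
    have hd0 : d = 0 := by omega
    have : f.leadingCoeff = f.coeff 0 := by
      rw [Polynomial.leadingCoeff, hfd, hd0]
    have h1 := hpure.2.1
    have h2 := hpure.2.2.1
    rw [this, h2] at h1
    omega
  have hdq : (0:ℚ) < (d:ℚ) := by exact_mod_cast hd1
  have ht1 : 1 ≤ t := by
    by_contra hcon
    have ht0 : t = 0 := by omega
    rw [ht0, hx0] at hxt
    omega
  have hD : (g.comp f).natDegree = d * e := by
    rw [natDegree_comp, hge, hfd, Nat.mul_comm]
  have hcoeff : ∀ i, (g.comp f).coeff i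
      = ∑ j ∈ Finset.range (e + 1), g.coeff j * (f ^ j).coeff i := by
    intro i
    rw [Polynomial.comp_eq_sum_left,
      Polynomial.sum_over_range' _ (fun n => by simp) (g.natDegree + 1) (Nat.lt_succ_self _),
      Polynomial.finset_sum_coeff, hge]
    simp [Polynomial.coeff_C_mul]
  have hxse : ∀ s, s ≤ t → xs s ≤ e := by
    intro s hst
    rcases eq_or_lt_of_le hst with rfl | hlt
    · omega
    · exact hxt ▸ (xs_lt hx t le_rfl s hlt).le
  -- every point of NP(g) lies above each extended segment line
  have hgpoint : ∀ s, 1 ≤ s → s ≤ t → ∀ j, j ≤ e → g.coeff j ≠ 0 →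
      ellF xs ys s ((e : ℚ) - j) ≤ (padicValRat p (g.coeff j) : ℚ) := by
    intro s hs1 hst j hje hgj
    obtain ⟨s', h1', h2', hu1, hu2⟩ := exists_seg ht1 hx0 (e - j) (by omega : e - j ≤ xs t)
    have hb := hbound s' h1' h2' j hgj hu1 hu2
    unfold nuQ at hb
    have hcast : ((e - j : ℕ) : ℚ) = (e : ℚ) - j := by
      push_cast [Nat.cast_sub hje]; ring
    have hb' : ellF xs ys s' ((e : ℚ) - j) ≤ (padicValRat p (g.coeff j) : ℚ) := by
      rw [ellF, lamF, ← hcast]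
      exact hb
    refine le_trans ?_ hb'
    -- ellF s ≤ ellF s' on [xs (s'-1), xs s']
    set A : ℚ := (ys (s' - 1) - lamF xs ys s' * (xs (s' - 1) : ℚ))
      - (ys (s - 1) - lamF xs ys s * (xs (s - 1) : ℚ)) with hA
    set B : ℚ := lamF xs ys s' - lamF xs ys s with hB
    have hdiff : ∀ u : ℚ, ellF xs ys s' u - ellF xs ys s u = A + B * u := by
      intro u; simp only [ellF, hA, hB]; ring
    have hell' : ∀ m, 1 ≤ m → m ≤ t → ellF xs ys m ((xs (m - 1) : ℚ)) = ys (m - 1) := by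
      intro m _ _; rw [ellF]; ring
    have hell2 : ∀ m, 1 ≤ m → m ≤ t → ellF xs ys m ((xs m : ℚ)) = ys m := by
      intro m hm1 hmt
      rw [ellF, chord hx hm1 hmt]; ring
    have e1 : 0 ≤ A + B * (xs (s' - 1) : ℚ) := by
      rw [← hdiff]
      have hva := vertex_above hx hinc hs1 hst (s' - 1) (by omega)
      rw [hell' s' h1' h2']
      linarith
    have e2 : 0 ≤ A + B * (xs s' : ℚ) := by
      rw [← hdiff]
      have hva := vertex_above hx hinc hs1 hst s' h2'
      rw [hell2 s' h1' h2']
      linarith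
    have hu1q : ((xs (s' - 1) : ℚ)) ≤ (e : ℚ) - j := by
      rw [← hcast]; exact_mod_cast hu1
    have hu2q : (e : ℚ) - j ≤ (xs s' : ℚ) := by
      rw [← hcast]; exact_mod_cast hu2
    have := lin_le hu1q hu2q e1 e2
    rw [← hdiff] at this
    linarith
  -- the fundamental term bound
  have hterm : ∀ s, 1 ≤ s → s ≤ t → ∀ j, j ≤ e → ∀ i : ℕ,
      g.coeff j ≠ 0 → (f ^ j).coeff i ≠ 0 →
      (ys (s - 1) + (lamF xs ys s / d) * (((d : ℚ) * e - i) - (d : ℚ) * xs (s - 1)))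
        + (((r : ℚ) - lamF xs ys s) / d) * ((d : ℚ) * j - i)
      ≤ (padicValRat p (g.coeff j * (f ^ j).coeff i) : ℚ) := by
    intro s hs1 hst j hje i hgj hfji
    rw [padicValRat.mul hgj hfji]
    push_cast
    have h1 := hgpoint s hs1 hst j hje hgj
    have h2 := pure_pow_bound hfd hd1 hpure j i hfji
    have key : (ys (s - 1) + (lamF xs ys s / d) * (((d : ℚ) * e - i) - (d : ℚ) * xs (s - 1)))
        + (((r : ℚ) - lamF xs ys s) / d) * ((d : ℚ) * j - i)
        = ellF xs ys s ((e : ℚ) - j) + (r : ℚ) * ((d : ℚ) * j - i) / d := by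
      rw [ellF]
      field_simp
      ring
    rw [key]
    exact add_le_add h1 h2
  -- vertex values
  have hvx : ∀ s, s ≤ t → (g.comp f).coeff (d * e - d * xs s) ≠ 0 ∧
      (padicValRat p ((g.comp f).coeff (d * e - d * xs s)) : ℚ) = ys s := by
    intro s hst
    have hxe : xs s ≤ e := hxse s hst
    set j0 := e - xs s with hj0
    have hi0 : d * e - d * xs s = j0 * d := by
      rw [hj0, Nat.sub_mul, Nat.mul_comm d e, Nat.mul_comm d (xs s)]
    have hvs := hvert s hst
    have hgj0 : g.coeff j0 ≠ 0 := hvs.1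
    have hgj0v : (padicValRat p (g.coeff j0) : ℚ) = ys s := hvs.2
    have hlead : (f ^ j0).coeff (j0 * d) = f.leadingCoeff ^ j0 := by
      rw [show j0 * d = (f ^ j0).natDegree by rw [natDegree_pow, hfd],
        Polynomial.coeff_natDegree, leadingCoeff_pow]
    have hleadne : (f ^ j0).coeff (j0 * d) ≠ 0 := by
      rw [hlead]
      exact pow_ne_zero _ (leadingCoeff_ne_zero.mpr hfne)
    have hleadv : padicValRat p ((f ^ j0).coeff (j0 * d)) = 0 := by
      rw [hlead, padicValRat.pow f.leadingCoeff, hpure.2.1, mul_zero]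
    rw [hi0, hcoeff (j0 * d)]
    have hres := val_sum_eq (p := p) (Finset.range (e + 1))
      (fun j => g.coeff j * (f ^ j).coeff (j0 * d)) j0
      (Finset.mem_range.mpr (by omega)) ?_ ?_
    · refine ⟨hres.1, ?_⟩
      rw [hres.2]
      rw [padicValRat.mul hgj0 hleadne, hleadv, add_zero]
      exact hgj0v
    · exact mul_ne_zero hgj0 hleadne
    · -- other terms have strictly larger valuation
      intro j hjr hjne hFj
      rw [padicValRat.mul hgj0 hleadne, hleadv, add_zero]
      have hgj : g.coeff j ≠ 0 := fun h => hFj (by simp [h])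
      have hfj : (f ^ j).coeff (j0 * d) ≠ 0 := fun h => hFj (by simp [h])
      have hjle : j ≤ e := by
        have := Finset.mem_range.mp hjr; omega
      have hdeg : j0 * d ≤ j * d := by
        have := le_natDegree_of_ne_zero hfj
        rw [natDegree_pow, hfd] at this
        exact this
      have hjgt : j0 < j := by
        rcases Nat.lt_or_ge j0 j with h | h
        · exact h
        · exfalso
          have : j = j0 := by
            rcases Nat.eq_or_lt_of_le h with h' | h'
            · exact h'
            · nlinarith [hdeg, hd1]
          exact hjne this
      -- s must be ≥ 1 here, since otherwise j0 = e and j > e impossible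
      have hs1 : 1 ≤ s := by
        by_contra hcon
        have : s = 0 := by omega
        rw [this, hx0] at hj0
        omega
      have hT := hterm s hs1 hst j hjle (j0 * d) hgj hfj
      -- the linear part evaluates to ys s at X = d * xs s
      have hchd := chord (ys := ys) hx hs1 hst
      have hXval : (ys (s - 1) + (lamF xs ys s / d) *
          (((d : ℚ) * e - (j0 * d : ℕ)) - (d : ℚ) * xs (s - 1))) = ys s := by
        have hX : ((j0 * d : ℕ) : ℚ) = (d : ℚ) * e - (d : ℚ) * xs s := by
          push_cast [hj0, Nat.cast_sub hxe]
          ring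
        rw [hX]
        have : ((d : ℚ) * e - ((d : ℚ) * e - (d : ℚ) * xs s)) - (d : ℚ) * xs (s - 1)
            = (d : ℚ) * ((xs s : ℚ) - (xs (s - 1) : ℚ)) := by ring
        rw [this]
        rw [show lamF xs ys s / d * ((d : ℚ) * ((xs s : ℚ) - (xs (s - 1) : ℚ)))
            = lamF xs ys s * ((xs s : ℚ) - (xs (s - 1) : ℚ)) by
          field_simp]
        rw [hchd]
        ring
      have hextra : 0 < (((r : ℚ) - lamF xs ys s) / d) * ((d : ℚ) * j - (j0 * d : ℕ)) := by
        apply mul_pos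
        · apply div_pos _ hdq
          have := hslope' s hs1 hst
          linarith
        · have : ((j0 * d : ℕ) : ℚ) < (d : ℚ) * j := by
            push_cast
            have : j0 * d < j * d := by
              apply Nat.mul_lt_mul_of_lt_of_le hjgt (le_refl d)
              omega
            calc ((j0 : ℚ) * d) < (j : ℚ) * d := by exact_mod_cast this
              _ = (d : ℚ) * j := by ring
          linarith
      rw [hXval] at hT
      rw [hgj0v]
      linarith
  -- now prove the seven components
  refine ⟨?_, ?_, ?_, ?_, ?_, ?_, ?_⟩
  · -- coeff 0 ≠ 0
    have := (hvx t le_rfl).1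
    rwa [hxt, Nat.sub_self] at this
  · simp [hx0]
  · simp only [hD, hxt]
  · intro s hst
    exact Nat.mul_lt_mul_of_pos_left (hx s hst) (by omega)
  · intro s hst
    have := hvx s hst
    simp only [hD]
    exact ⟨this.1, this.2⟩
  · -- slopes strictly increasing
    intro s hs1 hst
    have hcv : ∀ (a b : ℚ) (m m' : ℕ),
        (a - b) / (((d * xs m : ℕ) : ℚ) - ((d * xs m' : ℕ) : ℚ))
        = (a - b) / ((xs m : ℚ) - (xs m' : ℚ)) / d := by
      intro a b m m'
      rw [div_div]
      push_cast
      congr 1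
      ring
    simp only []
    rw [hcv (ys s) (ys (s - 1)) s (s - 1), hcv (ys (s + 1)) (ys s) (s + 1) s]
    have hlt := hinc0 s hs1 hst
    rw [div_lt_div_iff₀ hdq hdq]
    exact mul_lt_mul_of_pos_right hlt hdq
  · -- lower bound for all coefficients
    intro s hs1 hst i hine _ _
    have hiD : i ≤ d * e := by
      have := le_natDegree_of_ne_zero hine
      rwa [hD] at this
    have hcv : (ys s - ys (s - 1)) / (((d * xs s : ℕ) : ℚ) - ((d * xs (s - 1) : ℕ) : ℚ))
        = lamF xs ys s / d := by
      rw [lamF, div_div]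
      push_cast
      congr 1
      ring
    simp only [hD]
    rw [hcv]

    have hXc : (((d * e - i : ℕ) : ℚ)) = (d : ℚ) * e - i := by
      push_cast [Nat.cast_sub hiD]
      ring
    rw [hXc]
    unfold nuQ
    rw [hcoeff i] at hine ⊢
    refine val_sum_ge _ _ _ ?_ hine
    intro j hjr hFj
    have hgj : g.coeff j ≠ 0 := fun h => hFj (by simp [h])
    have hfj : (f ^ j).coeff i ≠ 0 := fun h => hFj (by simp [h])
    have hjle : j ≤ e := by
      have := Finset.mem_range.mp hjr; omega
    have hT := hterm s hs1 hst j hjle i hgj hfj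
    have hij : (i : ℚ) ≤ (d : ℚ) * j := by
      have := le_natDegree_of_ne_zero hfj
      rw [natDegree_pow, hfd] at this
      have : (i : ℚ) ≤ (j : ℚ) * d := by exact_mod_cast this
      linarith
    have hextra : 0 ≤ (((r : ℚ) - lamF xs ys s) / d) * ((d : ℚ) * j - i) := by
      apply mul_nonneg
      · apply div_nonneg _ hdq.le
        have := hslope' s hs1 hst
        linarith
      · linarith
    push_cast
    push_cast at hT
    linarith
end

section
/- Let p be a prime and let f(x) = a_d x^d + a_{d−1} x^{d−1} + ⋯ + a_1 x + a_0 ∈ ℚ[x] be a polynomial of degree d ≥ 1 with a_0 ≠ 0, such that ν_p(a_i) > 0 for every 0 ≤ i < d with a_i ≠ 0, and ν_p(a_d) = 0. Then for every integer n ≥ 1, the number of irreducible factors of the n-th iterate f^n(x) over ℚ, counted with multiplicity, is at most ν_p(a_0); in particular f is eventually stable over ℚ. -/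
open Polynomial

section AuxLemmas

open UniqueFactorizationMonoid

variable {p : ℕ} [hpf : Fact p.Prime]

private lemma one_lt_pQ : (1 : ℚ) < (p : ℚ) := by exact_mod_cast hpf.out.one_lt

private lemma pinv_lt_oneQ : (p : ℚ)⁻¹ < 1 := by
  have h := one_lt_pQ (p := p)
  rw [inv_lt_one_iff₀]
  right; exact h

private lemma pinv_le_oneQ : (p : ℚ)⁻¹ ≤ 1 := le_of_lt pinv_lt_oneQ

private lemma pnorm_pos {q : ℚ} (hq : q ≠ 0) : 0 < padicNorm p q :=
  lt_of_le_of_ne (padicNorm.nonneg q) (Ne.symm (padicNorm.nonzero hq))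

private lemma pnorm_le_inv_of_val {q : ℚ} (hq : q ≠ 0) (h : 1 ≤ padicValRat p q) :
    padicNorm p q ≤ (p : ℚ)⁻¹ := by
  rw [padicNorm.eq_zpow_of_nonzero hq, show ((p : ℚ)⁻¹ = (p : ℚ) ^ (-1 : ℤ)) by simp,
    zpow_le_zpow_iff_right₀ one_lt_pQ]
  omega

private lemma pnorm_eq_one_of_val {q : ℚ} (hq : q ≠ 0) (h : padicValRat p q = 0) :
    padicNorm p q = 1 := by
  rw [padicNorm.eq_zpow_of_nonzero hq, h]
  simp

private lemma val_pos_of_pnorm_lt_one {q : ℚ} (hq : q ≠ 0) (h : padicNorm p q < 1) :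
    1 ≤ padicValRat p q := by
  rw [padicNorm.eq_zpow_of_nonzero hq, show ((1 : ℚ) = (p : ℚ) ^ (0 : ℤ)) by simp,
    zpow_lt_zpow_iff_right₀ one_lt_pQ] at h
  omega

private lemma val_eq_zero_of_pnorm_eq_one {q : ℚ} (hq : q ≠ 0) (h : padicNorm p q = 1) :
    padicValRat p q = 0 := by
  rw [padicNorm.eq_zpow_of_nonzero hq, show ((1 : ℚ) = (p : ℚ) ^ (0 : ℤ)) by simp] at h
  have := (zpow_right_strictMono₀ (one_lt_pQ (p := p))).injective h
  omega

private lemma val_eq_of_pnorm_eq {q r : ℚ} (hq : q ≠ 0) (hr : r ≠ 0)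
    (h : padicNorm p q = padicNorm p r) : padicValRat p q = padicValRat p r := by
  rw [padicNorm.eq_zpow_of_nonzero hq, padicNorm.eq_zpow_of_nonzero hr] at h
  have := (zpow_right_strictMono₀ (one_lt_pQ (p := p))).injective h
  omega

private lemma pnorm_pow (q : ℚ) (n : ℕ) : padicNorm p (q ^ n) = padicNorm p q ^ n := by
  induction n with
  | zero => simp [padicNorm.one]
  | succ n ih => rw [pow_succ, padicNorm.mul, ih, pow_succ]

private lemma toZMod_eq_zero_iff' (x : ℤ_[p]) :
    PadicInt.toZMod x = 0 ↔ ‖x‖ < 1 := by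
  rw [← RingHom.mem_ker, PadicInt.ker_toZMod, IsLocalRing.mem_maximalIdeal]
  exact PadicInt.mem_nonunits

private lemma pnorm_rat_cast (q : ℚ) :
    ‖(algebraMap ℚ ℚ_[p]) q‖ = ((padicNorm p q : ℚ) : ℝ) := by
  rw [eq_ratCast (algebraMap ℚ ℚ_[p]) q]
  exact Padic.eq_padicNorm q

/-- Decomposition of a nonzero rational polynomial into a constant times the product
of its monic normalized factors. -/
private lemma nf_decomp (P : Polynomial ℚ) (hP : P ≠ 0) :
    ∃ c : ℚ, c ≠ 0 ∧ P = Polynomial.C c * (normalizedFactors P).prod ∧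
      P.leadingCoeff = c ∧
      ∀ g ∈ normalizedFactors P, g.Monic ∧ Irreducible g ∧ g ∣ P ∧ 1 ≤ g.natDegree := by
  classical
  obtain ⟨cu, hcu⟩ := (prod_normalizedFactors hP)
  have hmonic : ∀ g ∈ normalizedFactors P, g.Monic := by
    intro g hg
    have hirr := irreducible_of_normalized_factor g hg
    have hnorm := normalize_normalized_factor g hg
    rw [← hnorm]
    exact Polynomial.monic_normalize hirr.ne_zero
  have hprodmonic : (normalizedFactors P).prod.Monic := by
    have := Polynomial.monic_multiset_prod_of_monic (normalizedFactors P) id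
      (fun g hg => hmonic g hg)
    simpa using this
  have hcu0 : (cu : Polynomial ℚ) ≠ 0 := cu.ne_zero
  set c : ℚ := (cu : Polynomial ℚ).coeff 0 with hc
  have hC : (cu : Polynomial ℚ) = Polynomial.C c :=
    Polynomial.eq_C_of_natDegree_eq_zero (Polynomial.natDegree_eq_zero_of_isUnit cu.isUnit)
  have hcne : c ≠ 0 := by
    intro h
    rw [h, map_zero] at hC
    exact hcu0 hC
  refine ⟨c, hcne, ?_, ?_, ?_⟩
  · conv_lhs => rw [← hcu]
    rw [hC, mul_comm]
  · conv_lhs => rw [← hcu]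
    rw [hC, Polynomial.leadingCoeff_mul, hprodmonic.leadingCoeff,
      Polynomial.leadingCoeff_C, one_mul]
  · intro g hg
    have hirr := irreducible_of_normalized_factor g hg
    refine ⟨hmonic g hg, hirr, dvd_of_mem_normalizedFactors hg, ?_⟩
    by_contra hdeg
    push_neg at hdeg
    have h0 : g.natDegree = 0 := by omega
    have hne : g.coeff 0 ≠ 0 := by
      intro hz
      apply hirr.ne_zero
      rw [Polynomial.eq_C_of_natDegree_eq_zero h0, hz, map_zero]
    have : IsUnit g := by
      rw [Polynomial.eq_C_of_natDegree_eq_zero h0]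
      exact Polynomial.isUnit_C.mpr (IsUnit.mk0 _ hne)
    exact hirr.not_isUnit this

private lemma numFactors_eq_card_nf (P : Polynomial ℚ) :
    numFactors P = Multiset.card (normalizedFactors P) := by
  rw [numFactors, normalizedFactors, Multiset.card_map]

private lemma numFactors_le_natDegree (P : Polynomial ℚ) (hP : P ≠ 0) :
    numFactors P ≤ P.natDegree := by
  obtain ⟨c, hc, hPeq, -, hfac⟩ := nf_decomp P hP
  rw [numFactors_eq_card_nf]
  have hdeg : P.natDegree = ((normalizedFactors P).map Polynomial.natDegree).sum := by
    conv_lhs => rw [hPeq]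
    rw [Polynomial.natDegree_C_mul hc,
      Polynomial.natDegree_multiset_prod_of_monic _ (fun g hg => (hfac g hg).1)]
  rw [hdeg]
  have := Multiset.card_nsmul_le_sum
    (s := (normalizedFactors P).map Polynomial.natDegree) (a := 1)
    (by
      intro x hx
      obtain ⟨g, hg, rfl⟩ := Multiset.mem_map.mp hx
      exact (hfac g hg).2.2.2)
  simpa using this

private lemma val_prod_ge {s : Multiset ℚ}
    (h : ∀ x ∈ s, x ≠ 0 ∧ 1 ≤ padicValRat p x) :
    s.prod ≠ 0 ∧ (Multiset.card s : ℤ) ≤ padicValRat p s.prod := by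
  induction s using Multiset.induction with
  | empty => simp [padicValRat.one]
  | cons a s ih =>
      have ha := h a (Multiset.mem_cons_self a s)
      have hs := ih (fun x hx => h x (Multiset.mem_cons_of_mem hx))
      rw [Multiset.prod_cons]
      have hne : a * s.prod ≠ 0 := mul_ne_zero ha.1 hs.1
      refine ⟨hne, ?_⟩
      rw [padicValRat.mul ha.1 hs.1, Multiset.card_cons]
      push_cast
      omega

/-- The key counting lemma: if `P` corresponds to a polynomial over `ℤ_p` whose reduction
mod `p` is a nonzero constant times `X ^ natDegree P`, then the number of irreducible
factors of `P` over `ℚ` is at most the `p`-adic valuation of its constant coefficient. -/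
private lemma numFactors_le_val (P : Polynomial ℚ) (h0 : P.coeff 0 ≠ 0)
    (u : ZMod p) (hu : u ≠ 0) (F : Polynomial ℤ_[p])
    (hF : F.map (algebraMap ℤ_[p] ℚ_[p]) = P.map (algebraMap ℚ ℚ_[p]))
    (hFred : F.map (PadicInt.toZMod) = Polynomial.C u * Polynomial.X ^ P.natDegree) :
    (numFactors P : ℤ) ≤ padicValRat p (P.coeff 0) := by
  classical
  have hP : P ≠ 0 := fun h => h0 (by simp [h])
  set ι : ℚ →+* ℚ_[p] := algebraMap ℚ ℚ_[p] with hι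
  have hιinj : Function.Injective ι := ι.injective
  have hcoeinj : Function.Injective (algebraMap ℤ_[p] ℚ_[p]) :=
    IsFractionRing.injective ℤ_[p] ℚ_[p]
  set N := P.natDegree with hN
  have hdegF : F.natDegree = N := by
    have h1 := congrArg Polynomial.natDegree hF
    rwa [Polynomial.natDegree_map_eq_of_injective hcoeinj,
      Polynomial.natDegree_map_eq_of_injective hιinj] at h1
  have hlcF : PadicInt.toZMod (F.coeff N) = u := by
    have h1 := congrArg (fun Q => Polynomial.coeff Q N) hFred
    simpa [Polynomial.coeff_map, Polynomial.coeff_C_mul, Polynomial.coeff_X_pow] using h1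
  have hlc_unit : IsUnit (F.coeff N) := by
    rw [PadicInt.isUnit_iff]
    rcases lt_or_eq_of_le (PadicInt.norm_le_one (F.coeff N)) with h | h
    · exfalso
      apply hu
      rw [← hlcF, toZMod_eq_zero_iff' (F.coeff N)]
      exact h
    · exact h
  obtain ⟨w, hw⟩ := hlc_unit
  set F' : Polynomial ℤ_[p] := Polynomial.C ((w⁻¹ : ℤ_[p]ˣ) : ℤ_[p]) * F with hF'
  have hF'monic : F'.Monic := by
    have hFne : F ≠ 0 := by
      intro h
      apply hu
      rw [← hlcF, h]
      simp
    have hlcF2 : F.leadingCoeff = F.coeff N := by rw [Polynomial.leadingCoeff, hdegF]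
    rw [Polynomial.Monic, hF', Polynomial.leadingCoeff_mul, Polynomial.leadingCoeff_C,
      hlcF2, ← hw]
    exact w.inv_mul
  have hmapF' : F'.map (algebraMap ℤ_[p] ℚ_[p]) =
      Polynomial.C ((algebraMap ℤ_[p] ℚ_[p]) ((w⁻¹ : ℤ_[p]ˣ) : ℤ_[p])) * P.map ι := by
    rw [hF', Polynomial.map_mul, Polynomial.map_C, hF]
  have hmapF'red : F'.map (PadicInt.toZMod) =
      Polynomial.C (PadicInt.toZMod ((w⁻¹ : ℤ_[p]ˣ) : ℤ_[p]) * u) * Polynomial.X ^ N := by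
    rw [hF', Polynomial.map_mul, Polynomial.map_C, hFred, ← mul_assoc, ← Polynomial.C_mul]
  obtain ⟨c, hc, hPeq, hlcP, hfac⟩ := nf_decomp P hP
  -- every normalized factor has constant coefficient of positive valuation
  have hfactor : ∀ g ∈ normalizedFactors P,
      g.coeff 0 ≠ 0 ∧ 1 ≤ padicValRat p (g.coeff 0) := by
    intro g hg
    obtain ⟨hgmonic, hgirr, hgdvd, hgdeg⟩ := hfac g hg
    obtain ⟨h, hh⟩ := hgdvd
    have hg0 : g.coeff 0 ≠ 0 := by
      intro hz
      apply h0
      rw [hh, Polynomial.mul_coeff_zero, hz, zero_mul]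
    refine ⟨hg0, ?_⟩
    have hdvdK : g.map ι ∣ F'.map (algebraMap ℤ_[p] ℚ_[p]) := by
      rw [hmapF']
      exact (Polynomial.map_dvd ι ⟨h, hh⟩).trans (dvd_mul_left _ _)
    obtain ⟨G, hG⟩ := IsIntegrallyClosed.eq_map_mul_C_of_dvd ℚ_[p] hF'monic hdvdK
    rw [Polynomial.Monic.leadingCoeff (hgmonic.map ι), Polynomial.C_1, mul_one] at hG
    have hGmonic : G.Monic :=
      Polynomial.monic_of_injective hcoeinj (by rw [hG]; exact hgmonic.map ι)
    have hGdvd : G ∣ F' :=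
      hF'monic.dvd_of_fraction_map_dvd_fraction_map (K := ℚ_[p]) hGmonic
        (by rw [hG]; exact hdvdK)
    have hdvdred : G.map PadicInt.toZMod ∣
        Polynomial.C (PadicInt.toZMod ((w⁻¹ : ℤ_[p]ˣ) : ℤ_[p]) * u) * Polynomial.X ^ N := by
      have := Polynomial.map_dvd (PadicInt.toZMod (p := p)) hGdvd
      rwa [hmapF'red] at this
    have he_unit : IsUnit
        (Polynomial.C (PadicInt.toZMod ((w⁻¹ : ℤ_[p]ˣ) : ℤ_[p]) * u) : Polynomial (ZMod p)) := by
      apply Polynomial.isUnit_C.mpr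
      exact ((w⁻¹ : ℤ_[p]ˣ).isUnit.map PadicInt.toZMod).mul (isUnit_iff_ne_zero.mpr hu)
    have hdvdX : G.map PadicInt.toZMod ∣ Polynomial.X ^ N :=
      (IsUnit.dvd_mul_left he_unit).mp hdvdred
    obtain ⟨k, hkN, hassoc⟩ := (dvd_prime_pow Polynomial.prime_X N).mp hdvdX
    have hGred : G.map PadicInt.toZMod = Polynomial.X ^ k :=
      Polynomial.eq_of_monic_of_associated (hGmonic.map _) (Polynomial.monic_X_pow k) hassoc
    have hGdeg : G.natDegree = g.natDegree := by
      have h1 := congrArg Polynomial.natDegree hG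
      rwa [Polynomial.natDegree_map_eq_of_injective hcoeinj,
        Polynomial.natDegree_map_eq_of_injective hιinj] at h1
    have hk1 : 1 ≤ k := by
      have h2 := congrArg Polynomial.natDegree hGred
      rw [hGmonic.natDegree_map, Polynomial.natDegree_X_pow, hGdeg] at h2
      omega
    have hG0 : PadicInt.toZMod (G.coeff 0) = 0 := by
      have h3 := congrArg (fun Q => Polynomial.coeff Q 0) hGred
      have hkne : ¬(0 = k) := by omega
      simpa [Polynomial.coeff_map, Polynomial.coeff_X_pow, hkne] using h3
    have hGnorm : ‖G.coeff 0‖ < 1 := (toZMod_eq_zero_iff' _).mp hG0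
    have hGcoe : (algebraMap ℤ_[p] ℚ_[p]) (G.coeff 0) = ι (g.coeff 0) := by
      have h4 := congrArg (fun Q => Polynomial.coeff Q 0) hG
      simpa [Polynomial.coeff_map] using h4
    have h5 : ‖ι (g.coeff 0)‖ < 1 := by
      rw [← hGcoe, PadicInt.algebraMap_apply, ← PadicInt.norm_def]
      exact hGnorm
    have h6 : padicNorm p (g.coeff 0) < 1 := by
      rw [hι, pnorm_rat_cast] at h5
      exact_mod_cast h5
    exact val_pos_of_pnorm_lt_one hg0 h6
  -- the leading coefficient has valuation zero
  have hlcne : P.leadingCoeff ≠ 0 := Polynomial.leadingCoeff_ne_zero.mpr hP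
  have hlcnorm : padicNorm p (P.coeff N) = 1 := by
    have h7 : ι (P.coeff N) = (algebraMap ℤ_[p] ℚ_[p]) (F.coeff N) := by
      have h7' := congrArg (fun Q => Polynomial.coeff Q N) hF
      simpa [Polynomial.coeff_map] using h7'.symm
    have h8 : ‖ι (P.coeff N)‖ = 1 := by
      rw [h7, PadicInt.algebraMap_apply, ← PadicInt.norm_def, ← hw]
      exact PadicInt.norm_units w
    rw [hι, pnorm_rat_cast] at h8
    exact_mod_cast h8
  have hlcval : padicValRat p P.leadingCoeff = 0 :=
    val_eq_zero_of_pnorm_eq_one hlcne hlcnorm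
  -- constant coefficient as a product
  have h10 : ((normalizedFactors P).map (fun g => g.coeff 0)).prod =
      ((normalizedFactors P).prod).coeff 0 := by
    have := Multiset.prod_hom (normalizedFactors P) (Polynomial.constantCoeff (R := ℚ))
    simpa [Polynomial.constantCoeff_apply] using this
  have hconst : P.coeff 0 = c * ((normalizedFactors P).map (fun g => g.coeff 0)).prod := by
    conv_lhs => rw [hPeq]
    rw [Polynomial.mul_coeff_zero, Polynomial.coeff_C_zero, h10]
  have hprodfacts := val_prod_ge (s := (normalizedFactors P).map (fun g => g.coeff 0))
    (by
      intro x hx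
      obtain ⟨g, hg, rfl⟩ := Multiset.mem_map.mp hx
      exact hfactor g hg)
  have hval : padicValRat p (P.coeff 0) =
      padicValRat p c +
        padicValRat p (((normalizedFactors P).map fun g => g.coeff 0).prod) := by
    rw [hconst]
    exact padicValRat.mul hc hprodfacts.1
  rw [numFactors_eq_card_nf, hval, ← hlcP, hlcval, zero_add]
  have := hprodfacts.2
  simpa using this

private lemma polyIter_natDegree (f : Polynomial ℚ) (n : ℕ) :
    (polyIter f n).natDegree = f.natDegree ^ n := by
  induction n with
  | zero => simp [polyIter]
  | succ n ih =>
      rw [show polyIter f (n + 1) = f.comp (polyIter f n) from rfl,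
        Polynomial.natDegree_comp, ih, pow_succ, mul_comm]

private lemma exists_lift (f : Polynomial ℚ) (d : ℕ) (hfd : f.natDegree = d) (hd1 : 1 ≤ d)
    (hlow : ∀ i, i < d → f.coeff i ≠ 0 → 0 < padicValRat p (f.coeff i))
    (had : padicValRat p (f.coeff d) = 0) :
    ∃ u : ZMod p, u ≠ 0 ∧ ∃ F : Polynomial ℤ_[p],
      F.map (algebraMap ℤ_[p] ℚ_[p]) = f.map (algebraMap ℚ ℚ_[p]) ∧
      F.map PadicInt.toZMod = Polynomial.C u * Polynomial.X ^ d := by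
  classical
  have hfne : f ≠ 0 := by
    intro h
    rw [h, Polynomial.natDegree_zero] at hfd
    omega
  have hfd0 : f.coeff d ≠ 0 := by
    have := Polynomial.leadingCoeff_ne_zero.mpr hfne
    rwa [Polynomial.leadingCoeff, hfd] at this
  have hnormle : ∀ i, padicNorm p (f.coeff i) ≤ 1 := by
    intro i
    rcases eq_or_ne (f.coeff i) 0 with h | h
    · rw [h, padicNorm.zero]; norm_num
    · rcases lt_trichotomy i d with hi | hi | hi
      · have hv := hlow i hi h
        have h1 := pnorm_le_inv_of_val (p := p) h (by omega)
        exact h1.trans pinv_le_oneQ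
      · subst hi
        rw [pnorm_eq_one_of_val h had]
      · exfalso
        exact h (Polynomial.coeff_eq_zero_of_natDegree_lt (by omega))
  have hint : ∀ i, ‖(algebraMap ℚ ℚ_[p]) (f.coeff i)‖ ≤ 1 := by
    intro i
    rw [pnorm_rat_cast]
    exact_mod_cast hnormle i
  set lift : ℕ → ℤ_[p] := fun i => ⟨(algebraMap ℚ ℚ_[p]) (f.coeff i), hint i⟩ with hlift
  set F : Polynomial ℤ_[p] :=
    ∑ i ∈ Finset.range (d + 1), Polynomial.C (lift i) * Polynomial.X ^ i with hFdef
  have hmapcoe : F.map (algebraMap ℤ_[p] ℚ_[p]) = f.map (algebraMap ℚ ℚ_[p]) := by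
    conv_rhs => rw [(f.map (algebraMap ℚ ℚ_[p])).as_sum_range' (d + 1) (by
      rw [Polynomial.natDegree_map_eq_of_injective (algebraMap ℚ ℚ_[p]).injective, hfd]
      omega)]
    rw [hFdef, Polynomial.map_sum]
    apply Finset.sum_congr rfl
    intro i hi
    rw [Polynomial.map_mul, Polynomial.map_C, Polynomial.map_pow, Polynomial.map_X,
      Polynomial.coeff_map, ← Polynomial.C_mul_X_pow_eq_monomial]
    rfl
  have hlz : ∀ i, i < d → PadicInt.toZMod (lift i) = 0 := by
    intro i hid
    rw [toZMod_eq_zero_iff']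
    rcases eq_or_ne (f.coeff i) 0 with h | h
    · have hz : lift i = 0 := by
        apply Subtype.ext
        simp [hlift, h]
      rw [hz]
      simp
    · have h1 := pnorm_le_inv_of_val (p := p) h (by have := hlow i hid h; omega)
      have h2 : padicNorm p (f.coeff i) < 1 := lt_of_le_of_lt h1 pinv_lt_oneQ
      show ‖(algebraMap ℚ ℚ_[p]) (f.coeff i)‖ < 1
      rw [pnorm_rat_cast]
      exact_mod_cast h2
  refine ⟨PadicInt.toZMod (lift d), ?_, F, hmapcoe, ?_⟩
  · intro h
    rw [toZMod_eq_zero_iff'] at h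
    have h1 : ‖(algebraMap ℚ ℚ_[p]) (f.coeff d)‖ < 1 := h
    rw [pnorm_rat_cast] at h1
    have h2 : padicNorm p (f.coeff d) < 1 := by exact_mod_cast h1
    rw [pnorm_eq_one_of_val hfd0 had] at h2
    exact lt_irrefl _ h2
  · rw [hFdef, Polynomial.map_sum]
    rw [Finset.sum_eq_single_of_mem d (Finset.self_mem_range_succ d)]
    · rw [Polynomial.map_mul, Polynomial.map_C, Polynomial.map_pow, Polynomial.map_X]
    · intro i hi hne
      have hid : i < d := by
        have := Finset.mem_range.mp hi
        omega
      rw [Polynomial.map_mul, Polynomial.map_C, hlz i hid, Polynomial.C_0, zero_mul]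

private lemma exists_lift_iter (f : Polynomial ℚ) (d : ℕ) (hfd : f.natDegree = d)
    (hd1 : 1 ≤ d)
    (hlow : ∀ i, i < d → f.coeff i ≠ 0 → 0 < padicValRat p (f.coeff i))
    (had : padicValRat p (f.coeff d) = 0) :
    ∀ n : ℕ, ∃ u : ZMod p, u ≠ 0 ∧ ∃ F : Polynomial ℤ_[p],
      F.map (algebraMap ℤ_[p] ℚ_[p]) = (polyIter f n).map (algebraMap ℚ ℚ_[p]) ∧
      F.map PadicInt.toZMod = Polynomial.C u * Polynomial.X ^ (d ^ n) := by
  obtain ⟨u1, hu1, F1, hF1, hF1red⟩ := exists_lift f d hfd hd1 hlow had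
  intro n
  induction n with
  | zero =>
      refine ⟨1, one_ne_zero, Polynomial.X, ?_, ?_⟩
      · simp [polyIter]
      · simp [polyIter]
  | succ n ih =>
      obtain ⟨u, hu, F, hF, hFred⟩ := ih
      refine ⟨u1 * u ^ d, mul_ne_zero hu1 (pow_ne_zero d hu), F1.comp F, ?_, ?_⟩
      · rw [Polynomial.map_comp, hF1, hF, ← Polynomial.map_comp]
        rfl
      · rw [Polynomial.map_comp, hF1red, hFred, Polynomial.mul_comp, Polynomial.C_comp,
          Polynomial.pow_comp, Polynomial.X_comp, mul_pow, ← Polynomial.C_pow, ← pow_mul,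
          pow_succ, Polynomial.C_mul]
        ring

private lemma iter_const (f : Polynomial ℚ) (d : ℕ) (hfd : f.natDegree = d) (hd2 : 2 ≤ d)
    (ha0 : f.coeff 0 ≠ 0)
    (hlow : ∀ i, i < d → f.coeff i ≠ 0 → 0 < padicValRat p (f.coeff i))
    (had : padicValRat p (f.coeff d) = 0) :
    ∀ n : ℕ, (polyIter f (n + 1)).coeff 0 ≠ 0 ∧
      padicNorm p ((polyIter f (n + 1)).coeff 0) = padicNorm p (f.coeff 0) := by
  have hv0 : 1 ≤ padicValRat p (f.coeff 0) := by
    have := hlow 0 (by omega) ha0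
    omega
  have hR : padicNorm p (f.coeff 0) ≤ (p : ℚ)⁻¹ := pnorm_le_inv_of_val ha0 hv0
  have hRpos : 0 < padicNorm p (f.coeff 0) := pnorm_pos ha0
  have hstep : ∀ x : ℚ, x ≠ 0 → padicNorm p x = padicNorm p (f.coeff 0) →
      f.eval x ≠ 0 ∧ padicNorm p (f.eval x) = padicNorm p (f.coeff 0) := by
    intro x hx hnx
    have hxle : padicNorm p x ≤ (p : ℚ)⁻¹ := by rw [hnx]; exact hR
    have hxle1 : padicNorm p x ≤ 1 := hxle.trans pinv_le_oneQ
    have hdivX : padicNorm p ((Polynomial.divX f).eval x) ≤ (p : ℚ)⁻¹ := by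
      rw [Polynomial.eval_eq_sum_range]
      apply padicNorm.sum_le' ?_ (by positivity)
      intro i _
      rw [padicNorm.mul, pnorm_pow]
      rcases eq_or_ne ((Polynomial.divX f).coeff i) 0 with h | h
      · rw [h, padicNorm.zero, zero_mul]
        positivity
      · rw [Polynomial.coeff_divX] at h
        rcases lt_trichotomy (i + 1) d with hi | hi | hi
        · have hv := hlow (i + 1) hi h
          have h1 : padicNorm p ((Polynomial.divX f).coeff i) ≤ (p : ℚ)⁻¹ := by
            rw [Polynomial.coeff_divX]
            exact pnorm_le_inv_of_val h (by omega)
          have h2 : padicNorm p x ^ i ≤ 1 := pow_le_one₀ (padicNorm.nonneg x) hxle1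
          calc padicNorm p ((Polynomial.divX f).coeff i) * padicNorm p x ^ i
              ≤ (p : ℚ)⁻¹ * 1 := by
                apply mul_le_mul h1 h2 (pow_nonneg (padicNorm.nonneg x) i) (by positivity)
            _ = (p : ℚ)⁻¹ := mul_one _
        · have h1 : padicNorm p ((Polynomial.divX f).coeff i) = 1 := by
            rw [Polynomial.coeff_divX, hi]
            exact pnorm_eq_one_of_val (hi ▸ h) had
          have hi1 : 1 ≤ i := by omega
          have h2 : padicNorm p x ^ i ≤ padicNorm p x :=
            pow_le_of_le_one (padicNorm.nonneg x) hxle1 (by omega)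
          rw [h1, one_mul]
          exact h2.trans hxle
        · exfalso
          exact h (Polynomial.coeff_eq_zero_of_natDegree_lt (by omega))
    have hfx : f.eval x = (Polynomial.divX f).eval x * x + f.coeff 0 := by
      conv_lhs => rw [← Polynomial.divX_mul_X_add f]
      simp
    have hmulnorm : padicNorm p ((Polynomial.divX f).eval x * x) <
        padicNorm p (f.coeff 0) := by
      rw [padicNorm.mul]
      calc padicNorm p ((Polynomial.divX f).eval x) * padicNorm p x
          ≤ (p : ℚ)⁻¹ * padicNorm p x := mul_le_mul_of_nonneg_right hdivX (padicNorm.nonneg x)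
        _ = (p : ℚ)⁻¹ * padicNorm p (f.coeff 0) := by rw [hnx]
        _ < 1 * padicNorm p (f.coeff 0) := by
            exact mul_lt_mul_of_pos_right pinv_lt_oneQ hRpos
        _ = padicNorm p (f.coeff 0) := one_mul _
    have hmax : padicNorm p (f.eval x) = padicNorm p (f.coeff 0) := by
      rw [hfx, padicNorm.add_eq_max_of_ne (ne_of_lt hmulnorm),
        max_eq_right (le_of_lt hmulnorm)]
    refine ⟨?_, hmax⟩
    intro h
    rw [h, padicNorm.zero] at hmax
    exact hRpos.ne' hmax.symm
  intro n
  induction n with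
  | zero =>
      have h1 : polyIter f 1 = f := by
        show f.comp (polyIter f 0) = f
        show f.comp Polynomial.X = f
        exact Polynomial.comp_X
      rw [h1]
      exact ⟨ha0, rfl⟩
  | succ n ih =>
      have h2 : (polyIter f (n + 2)).coeff 0 = f.eval ((polyIter f (n + 1)).coeff 0) := by
        show (f.comp (polyIter f (n + 1))).coeff 0 = _
        rw [Polynomial.coeff_zero_eq_eval_zero, Polynomial.eval_comp,
          ← Polynomial.coeff_zero_eq_eval_zero]
      rw [h2]
      exact hstep _ ih.1 ih.2

end AuxLemmas

/-- Theorem 1.9: if all non-leading coefficients of `f` have positive `p`-adic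
valuation and the leading coefficient is a `p`-adic unit, then every iterate of
`f` has at most `ν_p(a_0)` irreducible factors; in particular `f` is eventually
stable over `ℚ`. -/
theorem eventually_stable_of_positive_valuation
    (p : ℕ) (hp : p.Prime)
    (f : Polynomial ℚ) (d : ℕ) (hfd : f.natDegree = d) (hd1 : 1 ≤ d)
    (ha0 : f.coeff 0 ≠ 0)
    (hlow : ∀ i, i < d → f.coeff i ≠ 0 → 0 < padicValRat p (f.coeff i))
    (had : padicValRat p (f.coeff d) = 0) :
    (∀ n : ℕ, 1 ≤ n →
      (numFactors (polyIter f n) : ℤ) ≤ padicValRat p (f.coeff 0)) ∧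
    ∃ C : ℕ, ∀ n : ℕ, 1 ≤ n → numFactors (polyIter f n) ≤ C := by
  haveI : Fact p.Prime := ⟨hp⟩
  have hv0 : 1 ≤ padicValRat p (f.coeff 0) := by
    have := hlow 0 (by omega) ha0
    omega
  have key : ∀ n : ℕ, 1 ≤ n →
      (numFactors (polyIter f n) : ℤ) ≤ padicValRat p (f.coeff 0) := by
    intro n hn
    obtain ⟨m, rfl⟩ : ∃ m, n = m + 1 := ⟨n - 1, by omega⟩
    obtain ⟨u, hu, F, hF, hFred⟩ := exists_lift_iter (p := p) f d hfd hd1 hlow had (m + 1)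
    have hdeg : (polyIter f (m + 1)).natDegree = d ^ (m + 1) := by
      rw [polyIter_natDegree, hfd]
    have hPne : polyIter f (m + 1) ≠ 0 := by
      intro h
      rw [h] at hF
      have hF0 : F = 0 :=
        Polynomial.map_injective _ (IsFractionRing.injective ℤ_[p] ℚ_[p]) (by simpa using hF)
      rw [hF0, Polynomial.map_zero] at hFred
      exact (mul_ne_zero (Polynomial.C_ne_zero.mpr hu)
        (pow_ne_zero _ Polynomial.X_ne_zero)) hFred.symm
    rcases eq_or_lt_of_le hd1 with hd | hd2
    · -- degree one case
      have h1 : numFactors (polyIter f (m + 1)) ≤ 1 := by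
        have h2 := numFactors_le_natDegree (polyIter f (m + 1)) hPne
        rw [hdeg, ← hd, one_pow] at h2
        exact h2
      have h3 : (numFactors (polyIter f (m + 1)) : ℤ) ≤ 1 := by exact_mod_cast h1
      omega
    · -- degree at least two
      have hconst := iter_const (p := p) f d hfd (by omega) ha0 hlow had m
      have hval : padicValRat p ((polyIter f (m + 1)).coeff 0) =
          padicValRat p (f.coeff 0) :=
        val_eq_of_pnorm_eq hconst.1 ha0 hconst.2
      have h4 := numFactors_le_val (polyIter f (m + 1)) hconst.1 u hu F hF
        (by rw [hdeg]; exact hFred)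
      rw [hval] at h4
      exact h4
  refine ⟨key, ⟨(padicValRat p (f.coeff 0)).toNat, ?_⟩⟩
  intro n hn
  have := key n hn
  omega
end

section
/- Let p be a prime and let g(x) = b_e x^e + b_{e-1} x^{e-1} + ⋯ + b_0 ∈ ℚ[x] have degree e ≥ 1 with b_0 ≠ 0, ν_p(b_e) = 0, and ν_p(b_s) ≥ 1 for every 0 ≤ s ≤ e−1 with b_s ≠ 0. Suppose NP_p(g) has successive vertices (0,0), (e−m_1, ν_p(b_{m_1})), …, (e−m_{t−1}, ν_p(b_{m_{t−1}})), (e, ν_p(b_0)), where e = m_0 > m_1 > ⋯ > m_t = 0. If α is a positive integer such that ν_p(b_0) ≤ (ν_p(b_{m_1})/(e−m_1))·α, then for every 0 ≤ s ≤ t one has ν_p(b_{m_s}) ≤ (ν_p(b_{m_1})/(e−m_1))·(α − m_s). -/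
open Polynomial

/-- Lemma 2.1. -/
theorem valuation_vertex_bound
    (p : ℕ) (hp : p.Prime)
    (g : Polynomial ℚ) (e t : ℕ) (m : ℕ → ℕ)
    (hge : g.natDegree = e) (he1 : 1 ≤ e)
    (hb0 : g.coeff 0 ≠ 0)
    (hbe : padicValRat p (g.coeff e) = 0)
    (hbi : ∀ i, i < e → g.coeff i ≠ 0 → 1 ≤ padicValRat p (g.coeff i))
    (hm0 : m 0 = e) (hmt : m t = 0)
    (hmdec : ∀ s, s < t → m (s + 1) < m s)
    (hNPg : HasNPVertices p g t (fun s => e - m s) (fun s => nuQ p (g.coeff (m s))))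
    (α : ℕ) (hα : 1 ≤ α)
    (hbound : nuQ p (g.coeff 0) ≤
      nuQ p (g.coeff (m 1)) / ((e : ℚ) - (m 1 : ℚ)) * (α : ℚ)) :
    ∀ s, s ≤ t →
      nuQ p (g.coeff (m s)) ≤
        nuQ p (g.coeff (m 1)) / ((e : ℚ) - (m 1 : ℚ)) * ((α : ℚ) - (m s : ℚ)) := by

  obtain ⟨h1, h2, h3, h4, h5, h6, h7⟩ := hNPg
  set L := nuQ p (g.coeff (m 1)) / ((e : ℚ) - (m 1 : ℚ)) with hLdef
  have ht : 1 ≤ t := by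
    by_contra h
    have ht0 : t = 0 := by omega
    rw [ht0] at hmt
    omega
  have hmono : ∀ s', s' ≤ t → ∀ s, s ≤ s' → m s' ≤ m s := by
    intro s'
    induction s' with
    | zero =>
      intro _ s hs
      have : s = 0 := Nat.le_zero.mp hs
      subst this; exact le_rfl
    | succ n ih =>
      intro hle s hs
      rcases Nat.eq_or_lt_of_le hs with h | h
      · rw [h]
      · have h1 := hmdec n (by omega)
        have h2 := ih (by omega) s (by omega)
        omega
  have hme : ∀ s, s ≤ t → m s ≤ e := by
    intro s hs
    have := hmono s hs 0 (Nat.zero_le s)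
    omega
  have hY0 : nuQ p (g.coeff (m 0)) = 0 := by
    rw [hm0]
    simp [nuQ, hbe]
  have hslope : ∀ j, 1 ≤ j → j ≤ t →
      L ≤ (nuQ p (g.coeff (m j)) - nuQ p (g.coeff (m (j - 1)))) /
          ((m (j - 1) : ℚ) - (m j : ℚ)) := by
    intro j hj
    induction j, hj using Nat.le_induction with
    | base =>
      intro _
      have e0 : (1 : ℕ) - 1 = 0 := rfl
      rw [e0, hY0, hm0, sub_zero]
    | succ n hn ih =>
      intro hnt
      have hih := ih (by omega)
      have h6n := h6 n hn (by omega)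
      simp only [] at h6n
      have c1 : ((e - m n : ℕ) : ℚ) = (e : ℚ) - (m n : ℚ) :=
        Nat.cast_sub (hme n (by omega))
      have c2 : ((e - m (n - 1) : ℕ) : ℚ) = (e : ℚ) - (m (n - 1) : ℚ) :=
        Nat.cast_sub (hme (n - 1) (by omega))
      have c3 : ((e - m (n + 1) : ℕ) : ℚ) = (e : ℚ) - (m (n + 1) : ℚ) :=
        Nat.cast_sub (hme (n + 1) (by omega))
      rw [c1, c2, c3] at h6n
      have d1 : ((e : ℚ) - (m n : ℚ)) - ((e : ℚ) - (m (n - 1) : ℚ)) =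
          (m (n - 1) : ℚ) - (m n : ℚ) := by ring
      have d2 : ((e : ℚ) - (m (n + 1) : ℚ)) - ((e : ℚ) - (m n : ℚ)) =
          (m n : ℚ) - (m (n + 1) : ℚ) := by ring
      rw [d1, d2] at h6n
      have e1 : n + 1 - 1 = n := by omega
      rw [e1]
      exact le_of_lt (lt_of_le_of_lt hih h6n)
  have hseg : ∀ j, 1 ≤ j → j ≤ t →
      L * ((m (j - 1) : ℚ) - (m j : ℚ)) ≤
        nuQ p (g.coeff (m j)) - nuQ p (g.coeff (m (j - 1))) := by
    intro j hj hjt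
    have hlt : m j < m (j - 1) := by
      have := hmdec (j - 1) (by omega)
      have e1 : j - 1 + 1 = j := by omega
      rw [e1] at this
      exact this
    have hpos : (0 : ℚ) < (m (j - 1) : ℚ) - (m j : ℚ) := by
      have : (m j : ℚ) < (m (j - 1) : ℚ) := by exact_mod_cast hlt
      linarith
    have := hslope j hj hjt
    calc L * ((m (j - 1) : ℚ) - (m j : ℚ))
        ≤ ((nuQ p (g.coeff (m j)) - nuQ p (g.coeff (m (j - 1)))) /
            ((m (j - 1) : ℚ) - (m j : ℚ))) * ((m (j - 1) : ℚ) - (m j : ℚ)) :=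
          mul_le_mul_of_nonneg_right this (le_of_lt hpos)
      _ = nuQ p (g.coeff (m j)) - nuQ p (g.coeff (m (j - 1))) :=
          div_mul_cancel₀ _ (ne_of_gt hpos)
  have hcum : ∀ d s, s + d ≤ t →
      L * ((m s : ℚ) - (m (s + d) : ℚ)) ≤
        nuQ p (g.coeff (m (s + d))) - nuQ p (g.coeff (m s)) := by
    intro d
    induction d with
    | zero => intro s _; simp
    | succ n ih =>
      intro s hst
      have hA := ih s (by omega)
      have hB := hseg (s + n + 1) (by omega) (by omega)
      have e1 : s + n + 1 - 1 = s + n := by omega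
      rw [e1] at hB
      have e2 : s + (n + 1) = s + n + 1 := by omega
      rw [e2]
      simp only [mul_sub] at hA hB ⊢
      linarith
  intro s hs
  have h1 := hcum (t - s) s (by omega)
  have e1 : s + (t - s) = t := by omega
  rw [e1, hmt] at h1
  push_cast at h1
  simp only [mul_sub] at h1 ⊢
  linarith [hbound]
end

section
/- Let p be a prime and let g(x) = b_e x^e + ⋯ + b_0 ∈ ℚ[x] have degree e ≥ 1 with b_0 ≠ 0, ν_p(b_e) = 0, and ν_p(b_i) ≥ 1 for every 0 ≤ i ≤ e−1 with b_i ≠ 0; suppose NP_p(g) has successive vertices (0,0), (e−m_1, r_1), …, (e−m_{t−1}, r_{t−1}), (e, r_t), where e = m_0 > m_1 > ⋯ > m_t = 0 and r_i = ν_p(b_{m_i}), with slopes λ_i = (r_i − r_{i−1})/(m_{i−1} − m_i). Let f(x) = A_d x^d + ⋯ + A_0 ∈ ℚ[x] have degree d ≥ 1 with ν_p(A_d) = 0, let λ = min{ ν_p(A_i)/(d−i) : 0 ≤ i < d, A_i ≠ 0 } and assume λ ≥ λ_1, and assume either (i) r_t < λ_1(d+e−1), or (ii) r_t = λ_1(d+e−1)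 together with (f(0) = 0 or ν_p(f(0)) > dλ or λ > λ_1). Fix n ≥ 0 and suppose NP_p(g ∘ f^n) has successive vertices (0,0), (d^n(e−m_1), r_1), …, (d^n(e−m_{t−1}), r_{t−1}), (d^n e, r_t). Write the composition as (g ∘ f^{n+1})(x) = Σ_{k=0}^{d^{n+1}e} C_k x^k. Then for every 0 ≤ s ≤ t, the coefficient C_{d^{n+1} m_s} satisfies ν_p(C_{d^{n+1} m_s}) = r_s. -/
open Polynomial

section AuxVal

variable {p : ℕ}

lemma nuQ_mul (hp : p.Prime) {a b : ℚ} (ha : a ≠ 0) (hb : b ≠ 0) :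
    nuQ p (a * b) = nuQ p a + nuQ p b := by
  haveI := Fact.mk hp
  unfold nuQ
  rw [padicValRat.mul ha hb]
  push_cast; ring

lemma nuQ_pow (hp : p.Prime) {a : ℚ} (ha : a ≠ 0) (j : ℕ) :
    nuQ p (a ^ j) = (j : ℚ) * nuQ p a := by
  haveI := Fact.mk hp
  unfold nuQ
  rw [padicValRat.pow a]
  push_cast; ring

/-- valuation of a sum, lower-bound version. -/
lemma nuQ_sum_ge (hp : p.Prime) {α : Type*} [DecidableEq α] {c : ℚ} (S : Finset α) (F : α → ℚ)
    (h : ∀ b ∈ S, F b ≠ 0 → c ≤ nuQ p (F b)) :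
    (∑ b ∈ S, F b) = 0 ∨ ((∑ b ∈ S, F b) ≠ 0 ∧ c ≤ nuQ p (∑ b ∈ S, F b)) := by
  haveI := Fact.mk hp
  classical
  induction S using Finset.induction_on with
  | empty => left; simp
  | @insert a S' haS ih =>
    have ih' := ih (fun b hb => h b (Finset.mem_insert_of_mem hb))
    rw [Finset.sum_insert haS]
    by_cases hFa : F a = 0
    · rw [hFa, zero_add]; exact ih'
    have hca := h a (Finset.mem_insert_self a S') hFa
    rcases ih' with h0 | ⟨hne, hle⟩
    · rw [h0, add_zero]; right; exact ⟨hFa, hca⟩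
    by_cases hsum : F a + ∑ b ∈ S', F b = 0
    · left; exact hsum
    right
    refine ⟨hsum, ?_⟩
    have hmin := padicValRat.min_le_padicValRat_add (p := p) hsum
    have hc : c ≤ ((min (padicValRat p (F a)) (padicValRat p (∑ b ∈ S', F b)) : ℤ) : ℚ) := by
      rw [Int.cast_min]
      exact le_min hca hle
    calc c ≤ _ := hc
    _ ≤ nuQ p (F a + ∑ b ∈ S', F b) := by unfold nuQ; exact_mod_cast hmin

/-- valuation of a sum, strict version. -/
lemma nuQ_sum_gt (hp : p.Prime) {α : Type*} [DecidableEq α] {c : ℚ} (S : Finset α) (F : α → ℚ)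
    (h : ∀ b ∈ S, F b ≠ 0 → c < nuQ p (F b)) :
    (∑ b ∈ S, F b) = 0 ∨ ((∑ b ∈ S, F b) ≠ 0 ∧ c < nuQ p (∑ b ∈ S, F b)) := by
  haveI := Fact.mk hp
  classical
  induction S using Finset.induction_on with
  | empty => left; simp
  | @insert a S' haS ih =>
    have ih' := ih (fun b hb => h b (Finset.mem_insert_of_mem hb))
    rw [Finset.sum_insert haS]
    by_cases hFa : F a = 0
    · rw [hFa, zero_add]; exact ih'
    have hca := h a (Finset.mem_insert_self a S') hFa
    rcases ih' with h0 | ⟨hne, hle⟩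
    · rw [h0, add_zero]; right; exact ⟨hFa, hca⟩
    by_cases hsum : F a + ∑ b ∈ S', F b = 0
    · left; exact hsum
    right
    refine ⟨hsum, ?_⟩
    have hmin := padicValRat.min_le_padicValRat_add (p := p) hsum
    have hc : c < ((min (padicValRat p (F a)) (padicValRat p (∑ b ∈ S', F b)) : ℤ) : ℚ) := by
      rw [Int.cast_min]
      exact lt_min hca hle
    calc c < _ := hc
    _ ≤ nuQ p (F a + ∑ b ∈ S', F b) := by unfold nuQ; exact_mod_cast hmin

/-- A sum with a unique term of minimal valuation. -/
lemma nuQ_sum_eq (hp : p.Prime) {α : Type*} [DecidableEq α] {c : ℚ} (S : Finset α) (F : α → ℚ)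
    (a : α) (haS : a ∈ S) (hFa : F a ≠ 0) (hva : nuQ p (F a) = c)
    (h : ∀ b ∈ S, b ≠ a → F b ≠ 0 → c < nuQ p (F b)) :
    (∑ b ∈ S, F b) ≠ 0 ∧ nuQ p (∑ b ∈ S, F b) = c := by
  haveI := Fact.mk hp
  classical
  rw [← Finset.add_sum_erase S F haS]
  have htail := nuQ_sum_gt hp (S.erase a) F
    (fun b hb => h b (Finset.mem_of_mem_erase hb) (Finset.ne_of_mem_erase hb))
  rcases htail with h0 | ⟨hne, hlt⟩
  · rw [h0, add_zero]; exact ⟨hFa, hva⟩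
  · have hlt' : padicValRat p (F a) < padicValRat p (∑ b ∈ S.erase a, F b) := by
      have h2 : nuQ p (F a) < nuQ p (∑ b ∈ S.erase a, F b) := hva ▸ hlt
      unfold nuQ at h2
      exact_mod_cast h2
    have hsum : F a + ∑ b ∈ S.erase a, F b ≠ 0 := by
      intro hcontra
      have h1 : (∑ b ∈ S.erase a, F b) = -F a := by linarith [hcontra]
      rw [h1, padicValRat.neg] at hlt'
      exact lt_irrefl _ hlt'
    refine ⟨hsum, ?_⟩
    have h3 := padicValRat.add_eq_of_lt (p := p) hsum hFa hne hlt'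
    unfold nuQ at hva ⊢
    rw [h3]; exact hva

end AuxVal

lemma polyIter_succ_right (f : Polynomial ℚ) (n : ℕ) :
    polyIter f (n + 1) = (polyIter f n).comp f := by
  induction n with
  | zero => show f.comp X = X.comp f; simp
  | succ n ih =>
    show f.comp (polyIter f (n+1)) = (f.comp (polyIter f n)).comp f
    rw [ih, Polynomial.comp_assoc]

lemma pow_top_coeff (f : Polynomial ℚ) (d : ℕ) (hfd : f.natDegree = d) (j : ℕ) :
    (f ^ j).coeff (d * j) = (f.coeff d) ^ j := by
  have h1 : (f ^ j).natDegree = j * d := by rw [Polynomial.natDegree_pow, hfd]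
  have h2 : (f ^ j).coeff (d * j) = (f ^ j).leadingCoeff := by
    rw [Polynomial.leadingCoeff, h1, mul_comm]
  rw [h2, Polynomial.leadingCoeff_pow, Polynomial.leadingCoeff, hfd]

lemma pow_coeff_lb {p : ℕ} (hp : p.Prime) (f : Polynomial ℚ) (d : ℕ) (hfd : f.natDegree = d)
    (lam : ℚ) (hA : ∀ i, i ≤ d → f.coeff i ≠ 0 → lam * ((d:ℚ) - i) ≤ nuQ p (f.coeff i)) :
    ∀ (j k : ℕ), (f ^ j).coeff k ≠ 0 → lam * ((d:ℚ) * (j:ℚ) - (k:ℚ)) ≤ nuQ p ((f ^ j).coeff k) := by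
  intro j
  induction j with
  | zero =>
    intro k hk
    rw [pow_zero] at hk ⊢
    have hk0 : k = 0 := by
      by_contra hne
      rw [Polynomial.coeff_one] at hk
      simp [hne] at hk
    subst hk0
    rw [Polynomial.coeff_one]
    simp [nuQ, padicValRat.one]
  | succ j ih =>
    intro k hk
    rw [pow_succ, Polynomial.coeff_mul] at hk ⊢
    have hterm : ∀ b ∈ Finset.HasAntidiagonal.antidiagonal k, (f^j).coeff b.1 * f.coeff b.2 ≠ 0 →
        lam * ((d:ℚ) * ((j+1 : ℕ) : ℚ) - (k:ℚ)) ≤ nuQ p ((f^j).coeff b.1 * f.coeff b.2) := by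
      intro b hb hFb
      have hb1 : (f ^ j).coeff b.1 ≠ 0 := left_ne_zero_of_mul hFb
      have hb2 : f.coeff b.2 ≠ 0 := right_ne_zero_of_mul hFb
      have hbsum : b.1 + b.2 = k := Finset.HasAntidiagonal.mem_antidiagonal.mp hb
      have h1 := ih b.1 hb1
      have hb2d : b.2 ≤ d := hfd ▸ Polynomial.le_natDegree_of_ne_zero hb2
      have h2 := hA b.2 hb2d hb2
      rw [nuQ_mul hp hb1 hb2]
      have hc : (b.1:ℚ) + (b.2:ℚ) = (k:ℚ) := by exact_mod_cast hbsum
      rw [← hc]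
      push_cast
      linarith
    rcases nuQ_sum_ge hp (Finset.HasAntidiagonal.antidiagonal k)
        (fun b => (f^j).coeff b.1 * f.coeff b.2) hterm with h0 | ⟨_, hle⟩
    · exact absurd h0 hk
    · exact hle

/-- The key analytic step: the valuation of a "vertex" coefficient of `h ∘ f`. -/
lemma comp_coeff_val {p : ℕ} (hp : p.Prime) (f : Polynomial ℚ) (d : ℕ)
    (hfd : f.natDegree = d) (hd1 : 1 ≤ d)
    (hAd : f.coeff d ≠ 0) (hAd0 : nuQ p (f.coeff d) = 0)
    (lam : ℚ) (hlampos : 0 < lam)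
    (hA : ∀ i, i ≤ d → f.coeff i ≠ 0 → lam * ((d:ℚ) - i) ≤ nuQ p (f.coeff i))
    (h : Polynomial ℚ) (j0 : ℕ) (c Lq : ℚ)
    (hB0 : h.coeff j0 ≠ 0) (hBv : nuQ p (h.coeff j0) = c)
    (hBlb : ∀ b, h.coeff b ≠ 0 → j0 < b → c - Lq * ((b:ℚ) - (j0:ℚ)) ≤ nuQ p (h.coeff b))
    (hLq : Lq ≤ lam * d)
    (hesc : Lq = lam * d → j0 = 0 ∧ (f.eval 0 = 0 ∨ (d:ℚ) * lam < nuQ p (f.eval 0))) :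
    (h.comp f).coeff (d * j0) ≠ 0 ∧ nuQ p ((h.comp f).coeff (d * j0)) = c := by
  classical
  haveI := Fact.mk hp
  have hpow := pow_coeff_lb hp f d hfd lam hA
  have hcf : (h.comp f).coeff (d * j0) = ∑ i ∈ h.support, h.coeff i * (f ^ i).coeff (d * j0) := by
    rw [Polynomial.comp_eq_sum_left, Polynomial.sum_def, Polynomial.finset_sum_coeff]
    simp only [Polynomial.coeff_C_mul]
  rw [hcf]
  have htop : (f ^ j0).coeff (d * j0) = (f.coeff d) ^ j0 := pow_top_coeff f d hfd j0
  have hFa : h.coeff j0 * (f ^ j0).coeff (d * j0) ≠ 0 := by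
    rw [htop]; exact mul_ne_zero hB0 (pow_ne_zero _ hAd)
  have hva : nuQ p (h.coeff j0 * (f ^ j0).coeff (d * j0)) = c := by
    rw [htop, nuQ_mul hp hB0 (pow_ne_zero _ hAd), nuQ_pow hp hAd j0, hAd0, hBv]
    ring
  refine nuQ_sum_eq hp h.support (fun i => h.coeff i * (f ^ i).coeff (d * j0)) j0
    (Polynomial.mem_support_iff.mpr hB0) hFa hva ?_
  intro b hbS hbne hFb
  have hhb : h.coeff b ≠ 0 := Polynomial.mem_support_iff.mp hbS
  have hfb : (f ^ b).coeff (d * j0) ≠ 0 := right_ne_zero_of_mul hFb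
  rcases lt_trichotomy b j0 with hblt | hbeq | hbgt
  · exfalso
    apply hfb
    apply Polynomial.coeff_eq_zero_of_natDegree_lt
    rw [Polynomial.natDegree_pow, hfd, mul_comm d j0]
    exact mul_lt_mul_of_pos_right hblt (by omega)
  · exact absurd hbeq hbne
  · have hb1 := hBlb b hhb hbgt
    have hb2 := hpow b (d * j0) hfb
    rw [nuQ_mul hp hhb hfb]
    have hδ : (1:ℚ) ≤ (b:ℚ) - (j0:ℚ) := by
      have : j0 + 1 ≤ b := hbgt
      have := (Nat.cast_le (α := ℚ)).mpr this
      push_cast at this; linarith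
    have hcast : ((d * j0 : ℕ) : ℚ) = (d:ℚ) * (j0:ℚ) := by push_cast; ring
    rw [hcast] at hb2
    rcases lt_or_eq_of_le hLq with hLlt | hLeq
    · have hprod : 0 < ((b:ℚ) - (j0:ℚ)) * (lam * d - Lq) := by
        apply mul_pos (by linarith) (by linarith)
      nlinarith [hb1, hb2, hprod]
      
    · obtain ⟨hj00, hdisj⟩ := hesc hLeq
      subst hj00
      simp only [Nat.mul_zero] at hfb ⊢
      have hf0 : (f ^ b).coeff 0 = (f.coeff 0) ^ b := by
        rw [Polynomial.coeff_zero_eq_eval_zero, Polynomial.eval_pow,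
          ← Polynomial.coeff_zero_eq_eval_zero]
      rcases hdisj with hev0 | hvA0
      · exfalso
        apply hfb
        rw [hf0, Polynomial.coeff_zero_eq_eval_zero, hev0]
        exact zero_pow (by omega)
      · have hA0ne : f.coeff 0 ≠ 0 := by
          intro hA00
          rw [Polynomial.coeff_zero_eq_eval_zero] at hA00
          rw [hA00] at hvA0
          have hz : nuQ p 0 = 0 := by simp [nuQ]
          rw [hz] at hvA0
          nlinarith
        rw [hf0, nuQ_pow hp hA0ne b]
        have hvA0' : (d:ℚ) * lam < nuQ p (f.coeff 0) := by
          rwa [Polynomial.coeff_zero_eq_eval_zero]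
        have hbpos : (0:ℚ) < (b:ℚ) := by
          have hb0 : 0 < b := by omega
          exact_mod_cast hb0
        have hmul : (b:ℚ) * ((d:ℚ) * lam) < (b:ℚ) * nuQ p (f.coeff 0) :=
          mul_lt_mul_of_pos_left hvA0' hbpos
        have hb1' : c - Lq * (b:ℚ) ≤ nuQ p (h.coeff b) := by
          simpa using hb1
        nlinarith [hb1', hmul, hLeq]

set_option maxHeartbeats 1000000 in
/-- Lemma 2.3. -/
theorem valuation_of_vertex_coefficients_of_next_iterate
    (p : ℕ) (hp : p.Prime)
    (g f : Polynomial ℚ) (e d t : ℕ) (m : ℕ → ℕ)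
    (hge : g.natDegree = e) (he1 : 1 ≤ e)
    (hb0 : g.coeff 0 ≠ 0)
    (hbe : padicValRat p (g.coeff e) = 0)
    (hbi : ∀ i, i < e → g.coeff i ≠ 0 → 1 ≤ padicValRat p (g.coeff i))
    (hm0 : m 0 = e) (hmt : m t = 0)
    (hmdec : ∀ s, s < t → m (s + 1) < m s)
    (hNPg : HasNPVertices p g t (fun s => e - m s) (fun s => nuQ p (g.coeff (m s))))
    (hfd : f.natDegree = d) (hd1 : 1 ≤ d)
    (had : padicValRat p (f.coeff d) = 0)
    (lam : ℚ)
    (hlam : IsLeast {q : ℚ | ∃ i, i < d ∧ f.coeff i ≠ 0 ∧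
      q = nuQ p (f.coeff i) / ((d : ℚ) - (i : ℚ))} lam)
    (lam1 : ℚ)
    (hlam1 : lam1 = nuQ p (g.coeff (m 1)) / ((e : ℚ) - (m 1 : ℚ)))
    (hlamge : lam1 ≤ lam)
    (hcase :
      nuQ p (g.coeff 0) < lam1 * ((d : ℚ) + (e : ℚ) - 1) ∨
      (nuQ p (g.coeff 0) = lam1 * ((d : ℚ) + (e : ℚ) - 1) ∧
        (f.eval 0 = 0 ∨ (d : ℚ) * lam < nuQ p (f.eval 0) ∨ lam1 < lam)))
    (n : ℕ)
    (hNPn : HasNPVertices p (g.comp (polyIter f n)) t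
      (fun s => d ^ n * (e - m s)) (fun s => nuQ p (g.coeff (m s)))) :
    ∀ s, s ≤ t →
      (g.comp (polyIter f (n + 1))).coeff (d ^ (n + 1) * m s) ≠ 0 ∧
      nuQ p ((g.comp (polyIter f (n + 1))).coeff (d ^ (n + 1) * m s)) =
        nuQ p (g.coeff (m s)) := by
  haveI := Fact.mk hp
  classical
  have hcomp0 : g.comp (polyIter f (n + 1)) = (g.comp (polyIter f n)).comp f := by
    rw [polyIter_succ_right, ← Polynomial.comp_assoc]
  obtain ⟨h, hH⟩ : ∃ h, g.comp (polyIter f n) = h := ⟨_, rfl⟩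
  rw [hH] at hNPn hcomp0
  obtain ⟨hg0', hgx0, hgxt, hgxinc, hgvert, hgslope, hgabove⟩ := hNPg
  obtain ⟨hh0, hhx0, hhxt, hhxinc, hhvert, hhslope, hhabove⟩ := hNPn
  -- basic combinatorial facts
  have ht1 : 1 ≤ t := by
    rcases Nat.eq_zero_or_pos t with rfl | h'
    · rw [hmt] at hm0; omega
    · exact h'
  have hmanti : ∀ a b, a ≤ b → b ≤ t → m b ≤ m a := by
    intro a b hab hbt
    induction b, hab using Nat.le_induction with
    | base => exact le_refl _
    | succ b hab ih =>
      exact le_trans (le_of_lt (hmdec b (by omega))) (ih (by omega))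
  have hmanti' : ∀ a b, a < b → b ≤ t → m b < m a := by
    intro a b hab hbt
    have h1 := hmdec a (by omega)
    have h2 := hmanti (a+1) b (by omega) hbt
    omega
  have hme : ∀ s, s ≤ t → m s ≤ e := by
    intro s hs
    have := hmanti 0 s (Nat.zero_le _) hs
    omega
  have hD : h.natDegree = d ^ n * e := by
    have h2 := hhxt
    simp only [hmt, Nat.sub_zero] at h2
    exact h2.symm
  have hd1' : (1:ℚ) ≤ (d:ℚ) := by exact_mod_cast hd1
  have hdn1 : (1:ℚ) ≤ (d:ℚ)^n := by
    calc (1:ℚ) = 1^n := (one_pow n).symm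
    _ ≤ (d:ℚ)^n := by
      apply pow_le_pow_left₀ (by norm_num) hd1'
  have hdnpos : (0:ℚ) < (d:ℚ)^n := lt_of_lt_of_le one_pos hdn1
  have hr0 : nuQ p (g.coeff (m 0)) = 0 := by
    rw [hm0]; unfold nuQ; rw [hbe]; norm_num
  have hgnz : ∀ s, s ≤ t → g.coeff (m s) ≠ 0 := by
    intro s hs
    have h2 := (hgvert s hs).1
    simpa [hge, Nat.sub_sub_self (hme s hs)] using h2
  have hidx : ∀ s, s ≤ t → h.natDegree - d ^ n * (e - m s) = d ^ n * m s := by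
    intro s hs
    have h2 : d ^ n * e = d ^ n * (e - m s) + d ^ n * m s := by
      rw [← Nat.mul_add, Nat.sub_add_cancel (hme s hs)]
    rw [hD, h2]
    simp
  have hhnz : ∀ s, s ≤ t → h.coeff (d ^ n * m s) ≠ 0 ∧
      nuQ p (h.coeff (d ^ n * m s)) = nuQ p (g.coeff (m s)) := by
    intro s hs
    have h2 := hhvert s hs
    simpa [hidx s hs] using h2
  -- slopes of the polygon of g
  obtain ⟨gs, hgs⟩ : ∃ gs : ℕ → ℚ, gs = fun u =>
      (nuQ p (g.coeff (m u)) - nuQ p (g.coeff (m (u-1)))) /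
      ((m (u-1) : ℚ) - (m u : ℚ)) := ⟨_, rfl⟩
  have hcastg : ∀ u, u ≤ t → ((e - m u : ℕ):ℚ) = (e:ℚ) - (m u:ℚ) := by
    intro u hu
    rw [Nat.cast_sub (hme u hu)]
  have hgs_eq : ∀ u, 1 ≤ u → u ≤ t →
      (nuQ p (g.coeff (m u)) - nuQ p (g.coeff (m (u-1)))) /
        (((e - m u : ℕ):ℚ) - ((e - m (u-1):ℕ):ℚ)) = gs u := by
    intro u h1 hu
    rw [hcastg u hu, hcastg (u-1) (by omega)]
    rw [show ((e:ℚ) - (m u:ℚ)) - ((e:ℚ) - (m (u-1):ℚ)) = (m (u-1):ℚ) - (m u:ℚ) from by ring,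
      hgs]
  have hscons : ∀ u, 1 ≤ u → u < t →
      (nuQ p (g.coeff (m u)) - nuQ p (g.coeff (m (u-1)))) /
        (((e - m u : ℕ):ℚ) - ((e - m (u-1) : ℕ):ℚ)) <
      (nuQ p (g.coeff (m (u+1))) - nuQ p (g.coeff (m u))) /
        (((e - m (u+1) : ℕ):ℚ) - ((e - m u : ℕ):ℚ)) :=
    fun u h1 hut => hgslope u h1 hut
  have hgscons : ∀ u, 1 ≤ u → u < t → gs u < gs (u+1) := by
    intro u h1 hut
    have hs := hscons u h1 hut
    rw [hgs_eq u h1 (by omega)] at hs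
    have h2 := hgs_eq (u+1) (by omega) (by omega)
    simp only [Nat.add_sub_cancel] at h2
    rw [h2] at hs
    exact hs
  have hgsmono' : ∀ a b, 1 ≤ a → a < b → b ≤ t → gs a < gs b := by
    intro a b h1 hab hbt
    induction b, hab using Nat.le_induction with
    | base => exact hgscons a h1 (by omega)
    | succ b hab ih => exact lt_trans (ih (by omega)) (hgscons b (by omega) (by omega))
  have hgsmono : ∀ a b, 1 ≤ a → a ≤ b → b ≤ t → gs a ≤ gs b := by
    intro a b h1 hab hbt
    rcases eq_or_lt_of_le hab with rfl | hlt
    · exact le_refl _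
    · exact le_of_lt (hgsmono' a b h1 hlt hbt)
  have hgs1 : gs 1 = lam1 := by
    simp only [hgs, Nat.sub_self]
    rw [hr0, sub_zero, hm0, hlam1]
  have hm1lt : m 1 < e := by
    have h2 : m 1 < m 0 := hmdec 0 ht1
    omega
  have hr1ge : (1:ℚ) ≤ nuQ p (g.coeff (m 1)) := by
    have h2 := hbi (m 1) (by omega) (hgnz 1 ht1)
    unfold nuQ; exact_mod_cast h2
  have hlam1pos : 0 < lam1 := by
    rw [hlam1]
    apply div_pos (by linarith)
    have h2 : (m 1:ℚ) < (e:ℚ) := by exact_mod_cast hm1lt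
    linarith
  have hlampos : 0 < lam := lt_of_lt_of_le hlam1pos hlamge
  have hgs_ge : ∀ s, 1 ≤ s → s ≤ t → lam1 ≤ gs s := by
    intro s h1 hs; rw [← hgs1]; exact hgsmono 1 s le_rfl h1 hs
  have hmcast : ∀ u, u < t → (0:ℚ) < (m u:ℚ) - (m (u+1):ℚ) := by
    intro u hu
    have h1 := hmdec u hu
    have h2 : (m (u+1):ℚ) < (m u:ℚ) := by exact_mod_cast h1
    linarith
  have hstep : ∀ u, u < t → nuQ p (g.coeff (m (u+1))) =
      nuQ p (g.coeff (m u)) + gs (u+1) * ((m u:ℚ) - (m (u+1):ℚ)) := by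
    intro u hu
    have hne : ((m u:ℚ) - (m (u+1):ℚ)) ≠ 0 := ne_of_gt (hmcast u hu)
    simp only [hgs, Nat.add_sub_cancel]
    rw [div_mul_cancel₀ _ hne]
    ring
  have hrlb : ∀ s, s ≤ t → lam1 * ((e:ℚ) - (m s:ℚ)) ≤ nuQ p (g.coeff (m s)) := by
    intro s
    induction s with
    | zero => intro _; rw [hr0, hm0]; simp
    | succ s ih =>
      intro hst
      have ih' := ih (by omega)
      have hstep' := hstep s (by omega)
      have hge' := hgs_ge (s+1) (by omega) hst
      have hpos := hmcast s (by omega)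
      have hmul := mul_le_mul_of_nonneg_right hge' (le_of_lt hpos)
      linarith
  -- slope bound coming from the case hypothesis
  have hmt1pos : 1 ≤ m (t-1) := by
    have := hmanti' (t-1) t (by omega) le_rfl
    omega
  have hrt_form : nuQ p (g.coeff (m t)) =
      nuQ p (g.coeff (m (t-1))) + gs t * ((m (t-1):ℚ)) := by
    have h2 := hstep (t-1) (by omega)
    rw [show t - 1 + 1 = t from by omega] at h2
    simpa [hmt] using h2
  have hrt_le : nuQ p (g.coeff (m t)) ≤ lam1 * ((d:ℚ) + (e:ℚ) - 1) := by
    rcases hcase with hc | hc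
    · rw [hmt]; exact le_of_lt hc
    · rw [hmt]; exact le_of_eq hc.1
  have h1lb := hrlb (t-1) (by omega)
  have hMpos : (0:ℚ) < (m (t-1):ℚ) := by exact_mod_cast hmt1pos
  have hM1 : (1:ℚ) ≤ (m (t-1):ℚ) := by exact_mod_cast hmt1pos
  have key2 : lam1 * ((d:ℚ) - 1 + (m (t-1):ℚ)) ≤ lam1 * (d:ℚ) * (m (t-1):ℚ) := by
    have hprod : 0 ≤ lam1 * ((d:ℚ) - 1) * ((m (t-1):ℚ) - 1) :=
      mul_nonneg (mul_nonneg hlam1pos.le (by linarith)) (by linarith)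
    nlinarith [hprod]
  have hgst_le : gs t ≤ lam1 * (d:ℚ) := by
    have key : gs t * (m (t-1):ℚ) ≤ lam1 * ((d:ℚ) - 1 + (m (t-1):ℚ)) := by
      linarith
    exact le_of_mul_le_mul_right (by linarith) hMpos
  have hgst_lt : nuQ p (g.coeff (m t)) < lam1 * ((d:ℚ) + (e:ℚ) - 1) → gs t < lam1 * (d:ℚ) := by
    intro hstrict
    have key : gs t * (m (t-1):ℚ) < lam1 * ((d:ℚ) - 1 + (m (t-1):ℚ)) := by
      linarith
    exact lt_of_mul_lt_mul_right (by linarith) (le_of_lt hMpos)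
  -- the key slope comparison
  have hkey : ∀ s, 1 ≤ s → s ≤ t → gs s / (d:ℚ)^n ≤ lam * (d:ℚ) ∧
      (gs s / (d:ℚ)^n = lam * (d:ℚ) →
        s = t ∧ (f.eval 0 = 0 ∨ (d:ℚ) * lam < nuQ p (f.eval 0))) := by
    intro s h1 hst
    have hgspos : 0 < gs s := lt_of_lt_of_le hlam1pos (hgs_ge s h1 hst)
    have hchain1 : gs s / (d:ℚ)^n ≤ gs s := div_le_self (le_of_lt hgspos) hdn1
    have hchain2 : gs s ≤ gs t := hgsmono s t h1 hst le_rfl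
    have hchain4 : lam1 * (d:ℚ) ≤ lam * (d:ℚ) :=
      mul_le_mul_of_nonneg_right hlamge (by linarith)
    constructor
    · linarith
    · intro heq
      have e2 : gs s = gs t := by linarith
      have e3 : gs t = lam1 * (d:ℚ) := by linarith
      have e4 : lam1 = lam := by
        have h5 : lam1 * (d:ℚ) = lam * (d:ℚ) := by linarith
        have hdpos : (0:ℚ) < (d:ℚ) := by linarith
        exact mul_right_cancel₀ (ne_of_gt hdpos) h5
      have hseqt : s = t := by
        by_contra hne
        have := hgsmono' s t h1 (by omega) le_rfl
        linarith
      refine ⟨hseqt, ?_⟩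
      rcases hcase with hc | hc
      · exfalso
        have hc' : nuQ p (g.coeff (m t)) < lam1 * ((d:ℚ) + (e:ℚ) - 1) := by
          rw [hmt]; exact hc
        have := hgst_lt hc'
        linarith
      · rcases hc.2 with h' | h' | h'
        · exact Or.inl h'
        · exact Or.inr h'
        · exfalso; linarith
  -- convexity machinery for the polygon of h
  obtain ⟨L, hLdef⟩ : ∃ L : ℕ → ℚ, L = fun u => gs u / (d:ℚ)^n := ⟨_, rfl⟩
  obtain ⟨Xq, hXqdef⟩ : ∃ Xq : ℕ → ℚ, Xq = fun u => (d:ℚ)^n * ((e:ℚ) - (m u:ℚ)) := ⟨_, rfl⟩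
  have hXcast : ∀ u, u ≤ t → ((d ^ n * (e - m u) : ℕ) : ℚ) = Xq u := by
    intro u hu
    have h2 : ((d ^ n * (e - m u) : ℕ) : ℚ) = (d:ℚ)^n * ((e:ℚ) - (m u:ℚ)) := by
      rw [Nat.cast_mul, Nat.cast_pow, Nat.cast_sub (hme u hu)]
    rw [h2, hXqdef]
  have hL_exact : ∀ u, 1 ≤ u → u ≤ t →
      nuQ p (g.coeff (m u)) - nuQ p (g.coeff (m (u-1))) = L u * (Xq u - Xq (u-1)) := by
    intro u h1 hu
    have hlt := hmanti' (u-1) u (by omega) hu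
    have hlt' : (m u:ℚ) < (m (u-1):ℚ) := by exact_mod_cast hlt
    have hne : ((m (u-1):ℚ) - (m u:ℚ)) ≠ 0 := ne_of_gt (by linarith)
    have hdn : ((d:ℚ)^n) ≠ 0 := ne_of_gt hdnpos
    simp only [hLdef, hXqdef, hgs]
    rw [show (d:ℚ)^n * ((e:ℚ) - (m u:ℚ)) - (d:ℚ)^n * ((e:ℚ) - (m (u-1):ℚ)) =
        (((m (u-1):ℚ) - (m u:ℚ)) * (d:ℚ)^n) from by ring]
    rw [div_div, div_mul_cancel₀ _ (mul_ne_zero hne hdn)]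
  have hLmono : ∀ a b, 1 ≤ a → a ≤ b → b ≤ t → L a ≤ L b := by
    intro a b h1 hab hbt
    simp only [hLdef]
    exact (div_le_div_iff_of_pos_right hdnpos).mpr (hgsmono a b h1 hab hbt)
  have hchainX : ∀ s, 1 ≤ s → s ≤ t → ∀ u, u ≤ s →
      nuQ p (g.coeff (m s)) - nuQ p (g.coeff (m u)) ≤ L s * (Xq s - Xq u) := by
    intro s h1 hst
    have H : ∀ k, ∀ u, u + k = s →
        nuQ p (g.coeff (m s)) - nuQ p (g.coeff (m u)) ≤ L s * (Xq s - Xq u) := by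
      intro k
      induction k with
      | zero =>
        intro u hu
        have : u = s := by omega
        subst this
        simp
      | succ k ih =>
        intro u hu
        have h2 := ih (u+1) (by omega)
        have hex := hL_exact (u+1) (by omega) (by omega)
        simp only [Nat.add_sub_cancel] at hex
        have hL := hLmono (u+1) s (by omega) (by omega) hst
        have hXpos : (0:ℚ) ≤ Xq (u+1) - Xq u := by
          simp only [hXqdef]
          have h3 := hmcast u (by omega)
          have h4 := mul_nonneg (le_of_lt hdnpos) (le_of_lt h3)
          linarith
        have hmul := mul_le_mul_of_nonneg_right hL hXpos
        linarith
    exact fun u hu => H (s - u) u (by omega)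
  have hseg : ∀ s, 1 ≤ s → s ≤ t → ∀ x : ℕ, x ≤ d^n * (e - m s) →
      ∃ u, 1 ≤ u ∧ u ≤ s ∧ d^n * (e - m (u-1)) ≤ x ∧ x ≤ d^n * (e - m u) := by
    intro s
    induction s with
    | zero => intro h1; exact absurd h1 (by omega)
    | succ s ih =>
      intro _ hst x hx
      by_cases hs0 : s = 0
      · subst hs0
        refine ⟨1, le_rfl, le_rfl, ?_, hx⟩
        simp [hm0]
      · by_cases hxs : x ≤ d^n * (e - m s)
        · obtain ⟨u, hu1, hus, hlo, hhi⟩ := ih (by omega) (by omega) x hxs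
          exact ⟨u, hu1, by omega, hlo, hhi⟩
        · refine ⟨s+1, by omega, le_rfl, ?_, hx⟩
          simp only [Nat.add_sub_cancel]
          omega
  have hconv : ∀ s, 1 ≤ s → s ≤ t → ∀ b, h.coeff b ≠ 0 → d^n * m s < b →
      nuQ p (g.coeff (m s)) - L s * ((b:ℚ) - (d:ℚ)^n * (m s:ℚ)) ≤ nuQ p (h.coeff b) := by
    intro s h1 hst b hb hbgt
    have hble : b ≤ h.natDegree := Polynomial.le_natDegree_of_ne_zero hb
    have hsplit : h.natDegree = d ^ n * (e - m s) + d ^ n * m s := by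
      rw [hD, ← Nat.mul_add, Nat.sub_add_cancel (hme s hst)]
    have hxle : h.natDegree - b ≤ d ^ n * (e - m s) := by
      apply Nat.sub_le_iff_le_add.mpr
      rw [hsplit]
      exact Nat.add_le_add_left (le_of_lt hbgt) _
    obtain ⟨u, hu1, hus, hlo, hhi⟩ := hseg s h1 hst (h.natDegree - b) hxle
    have hut : u ≤ t := le_trans hus hst
    have hslw : (nuQ p (g.coeff (m u)) - nuQ p (g.coeff (m (u-1)))) /
        (((d^n*(e - m u):ℕ):ℚ) - ((d^n*(e - m (u-1)):ℕ):ℚ)) = L u := by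
      rw [hXcast u hut, hXcast (u-1) (by omega)]
      simp only [hLdef, hgs, hXqdef]
      rw [div_div]
      congr 1
      ring
    have hab2 : nuQ p (g.coeff (m (u-1))) +
        ((nuQ p (g.coeff (m u)) - nuQ p (g.coeff (m (u-1)))) /
          (((d^n*(e - m u) : ℕ):ℚ) - ((d^n*(e - m (u-1)) : ℕ):ℚ))) *
          (((h.natDegree - b : ℕ):ℚ) - ((d^n*(e - m (u-1)) : ℕ):ℚ)) ≤ nuQ p (h.coeff b) :=
      hhabove u hu1 hut b hb hlo hhi
    rw [hslw, hXcast (u-1) (by omega)] at hab2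
    have hxq : ((h.natDegree - b : ℕ):ℚ) = (d:ℚ)^n * (e:ℚ) - (b:ℚ) := by
      rw [Nat.cast_sub hble, hD]
      push_cast
      ring
    have hXu : ((h.natDegree - b:ℕ):ℚ) ≤ Xq u := by
      have h2 := (Nat.cast_le (α := ℚ)).mpr hhi
      rwa [hXcast u hut] at h2
    have hexact := hL_exact u hu1 hut
    have hchain := hchainX s h1 hst u hus
    have hgoalid : (b:ℚ) - (d:ℚ)^n * (m s:ℚ) = Xq s - ((h.natDegree - b:ℕ):ℚ) := by
      rw [hxq]
      simp only [hXqdef]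
      ring
    rw [hgoalid]
    have hLu := hLmono u s hu1 hus hst
    have hmono2 : L u * (Xq u - ((h.natDegree - b:ℕ):ℚ)) ≤
        L s * (Xq u - ((h.natDegree - b:ℕ):ℚ)) :=
      mul_le_mul_of_nonneg_right hLu (by linarith)
    linarith
  -- main argument
  intro s hst
  have hcomp : g.comp (polyIter f (n + 1)) = h.comp f := hcomp0
  have hK : d ^ (n + 1) * m s = d * (d ^ n * m s) := by ring
  have hAd : f.coeff d ≠ 0 := by
    have hfne : f ≠ 0 := by
      intro h0
      rw [h0, Polynomial.natDegree_zero] at hfd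
      omega
    have h2 := Polynomial.leadingCoeff_ne_zero.mpr hfne
    rwa [Polynomial.leadingCoeff, hfd] at h2
  have hAd0 : nuQ p (f.coeff d) = 0 := by unfold nuQ; rw [had]; norm_num
  have hA : ∀ i, i ≤ d → f.coeff i ≠ 0 → lam * ((d:ℚ) - (i:ℚ)) ≤ nuQ p (f.coeff i) := by
    intro i hi hfi
    rcases eq_or_lt_of_le hi with rfl | hilt
    · rw [hAd0]
      simp
    · have hmem : nuQ p (f.coeff i) / ((d:ℚ) - (i:ℚ)) ∈ {q : ℚ | ∃ i, i < d ∧ f.coeff i ≠ 0 ∧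
          q = nuQ p (f.coeff i) / ((d : ℚ) - (i : ℚ))} := ⟨i, hilt, hfi, rfl⟩
      have hle := hlam.2 hmem
      have hdipos : (0:ℚ) < (d:ℚ) - (i:ℚ) := by
        have h2 : (i:ℚ) < (d:ℚ) := by exact_mod_cast hilt
        linarith
      rw [le_div_iff₀ hdipos] at hle
      exact hle
  have hvert := hhnz s hst
  rw [hcomp, hK]
  by_cases hs0 : s = 0
  · subst hs0
    refine comp_coeff_val hp f d hfd hd1 hAd hAd0 lam hlampos hA h (d^n * m 0)
      (nuQ p (g.coeff (m 0))) (lam * (d:ℚ) - 1) hvert.1 hvert.2 ?_ (by linarith) ?_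
    · intro b hb hbgt
      exfalso
      have hble := Polynomial.le_natDegree_of_ne_zero hb
      rw [hD] at hble
      rw [hm0] at hbgt
      omega
    · intro habs
      exfalso
      linarith
  · have hs1 : 1 ≤ s := by omega
    have hk := hkey s hs1 hst
    refine comp_coeff_val hp f d hfd hd1 hAd hAd0 lam hlampos hA h (d^n * m s)
      (nuQ p (g.coeff (m s))) (L s) hvert.1 hvert.2 ?_ ?_ ?_
    · intro b hb hbgt
      have h2 := hconv s hs1 hst b hb hbgt
      have hc : ((d^n * m s : ℕ):ℚ) = (d:ℚ)^n * (m s:ℚ) := by push_cast; ring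
      rw [hc]
      exact h2
    · simp only [hLdef]
      exact hk.1
    · intro heq
      simp only [hLdef] at heq
      obtain ⟨hseqt, hdisj⟩ := hk.2 heq
      constructor
      · rw [hseqt, hmt, Nat.mul_zero]
      · exact hdisj
end

section
/- Let p be a prime and let g(x) = b_e x^e + ⋯ + b_0 ∈ ℚ[x] have degree e ≥ 1 with b_0 ≠ 0, ν_p(b_e) = 0, and ν_p(b_i) ≥ 1 for every 0 ≤ i ≤ e−1 with b_i ≠ 0. Suppose NP_p(g) has successive vertices (0,0), (e−m_1, r_1), …, (e−m_{t−1}, r_{t−1}), (e, r_t), where e = m_0 > m_1 > ⋯ > m_t = 0 and r_i = ν_p(b_{m_i}), and set λ_1 = r_1/(e−m_1). If r_t ≤ λ_1(2e−1), then for every integer n ≥ 1 the number of irreducible factors of the n-th iterate g^n(x) over ℚ, counted with multiplicity, is at most r_t; in particular g is eventually stable over ℚ. -/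
open Polynomial

section AuxLemmas

variable {p : ℕ} [hp : Fact p.Prime]

lemma normCast_le_one {x : ℚ} (h : 0 ≤ padicValRat p x) : ‖(x : ℚ_[p])‖ ≤ 1 := by
  by_cases hx : x = 0
  · simp [hx]
  · rw [Padic.norm_le_one_iff_val_nonneg, Padic.valuation_ratCast]
    exact_mod_cast h

lemma normCast_eq_one {x : ℚ} (hx : x ≠ 0) (h : padicValRat p x = 0) : ‖(x : ℚ_[p])‖ = 1 := by
  have hx' : (x : ℚ_[p]) ≠ 0 := by exact_mod_cast hx
  rw [Padic.norm_eq_zpow_neg_valuation hx', Padic.valuation_ratCast, h]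
  simp

lemma normCast_lt_one {x : ℚ} (hx : x ≠ 0) : ‖(x : ℚ_[p])‖ < 1 ↔ 1 ≤ padicValRat p x := by
  have hx' : (x : ℚ_[p]) ≠ 0 := by exact_mod_cast hx
  rw [Padic.norm_eq_zpow_neg_valuation hx', Padic.valuation_ratCast]
  have hp1 : (1 : ℝ) < (p : ℝ) := by exact_mod_cast hp.out.one_lt
  rw [show (1:ℝ) = (p:ℝ) ^ (0 : ℤ) by simp, zpow_lt_zpow_iff_right₀ hp1]
  omega

lemma val_sum_lt (r : ℤ) (s : Finset ℕ) (F : ℕ → ℚ)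
    (h : ∀ i ∈ s, F i ≠ 0 → r < padicValRat p (F i)) (hs : ∑ i ∈ s, F i ≠ 0) :
    r < padicValRat p (∑ i ∈ s, F i) := by
  classical
  induction s using Finset.induction_on with
  | empty => simp at hs
  | insert _ _ ha ih =>
    rename_i a s'
    rw [Finset.sum_insert ha] at hs ⊢
    by_cases h1 : F a = 0
    · rw [h1, zero_add] at hs ⊢
      exact ih (fun i hi hne => h i (Finset.mem_insert_of_mem hi) hne) hs
    · by_cases h2 : ∑ i ∈ s', F i = 0
      · rw [h2, add_zero] at hs ⊢
        exact h a (Finset.mem_insert_self a s') h1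
      · exact lt_of_lt_of_le
          (lt_min (h a (Finset.mem_insert_self a s') h1)
            (ih (fun i hi hne => h i (Finset.mem_insert_of_mem hi) hne) h2))
          (padicValRat.min_le_padicValRat_add hs)

lemma val_prod (s : Multiset ℚ) (h : ∀ x ∈ s, x ≠ 0) :
    s.prod ≠ 0 ∧ padicValRat p s.prod = (s.map (padicValRat p)).sum := by
  induction s using Multiset.induction_on with
  | empty => simp
  | cons a s ih =>
    have ha : a ≠ 0 := h a (Multiset.mem_cons_self a s)
    obtain ⟨h1, h2⟩ := ih (fun x hx => h x (Multiset.mem_cons_of_mem hx))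
    constructor
    · rw [Multiset.prod_cons]; exact mul_ne_zero ha h1
    · rw [Multiset.prod_cons, padicValRat.mul ha h1, h2, Multiset.map_cons, Multiset.sum_cons]

lemma multiset_sum_map_sub {α : Type*} (s : Multiset α) (f g : α → ℤ) :
    (s.map (fun x => f x - g x)).sum = (s.map f).sum - (s.map g).sum := by
  induction s using Multiset.induction_on with
  | empty => simp
  | cons a s ih => simp only [Multiset.map_cons, Multiset.sum_cons, ih]; ring

/-- a general compositional iterate, for transport along ring homs -/
noncomputable def iterP {R : Type*} [CommSemiring R] (f : Polynomial R) : ℕ → Polynomial R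
  | 0 => X
  | n + 1 => f.comp (iterP f n)

lemma iterP_map {R S : Type*} [CommSemiring R] [CommSemiring S] (φ : R →+* S) (f : Polynomial R)
    (n : ℕ) : (iterP f n).map φ = iterP (f.map φ) n := by
  induction n with
  | zero => simp [iterP]
  | succ k ih => rw [iterP, iterP, Polynomial.map_comp, ih]

lemma polyIter_eq (g : Polynomial ℚ) (n : ℕ) : polyIter g n = iterP g n := by
  induction n with
  | zero => rfl
  | succ k ih => rw [polyIter, iterP, ih]

lemma iterP_CX {F : Type*} [Field F] (u : F) (hu : u ≠ 0) (e n : ℕ) :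
    ∃ v : F, v ≠ 0 ∧ iterP (C u * X ^ e) n = C v * X ^ (e ^ n) := by
  induction n with
  | zero => exact ⟨1, one_ne_zero, by simp [iterP]⟩
  | succ k ih =>
    obtain ⟨v, hv, hiter⟩ := ih
    refine ⟨u * v ^ e, mul_ne_zero hu (pow_ne_zero _ hv), ?_⟩
    rw [iterP, hiter, mul_comp, C_comp, X_pow_comp, mul_pow, ← C_pow, ← pow_mul,
      ← mul_assoc, ← C_mul, pow_succ]

end AuxLemmas

/-- Section 6.3: bound on the number of irreducible factors of iterates by
`r_t`, and eventual stability. -/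
theorem iterate_factors_le_rt
    (p : ℕ) (hp : p.Prime)
    (g : Polynomial ℚ) (e t : ℕ) (m : ℕ → ℕ)
    (hge : g.natDegree = e) (he1 : 1 ≤ e)
    (hb0 : g.coeff 0 ≠ 0)
    (hbe : padicValRat p (g.coeff e) = 0)
    (hbi : ∀ i, i < e → g.coeff i ≠ 0 → 1 ≤ padicValRat p (g.coeff i))
    (hm0 : m 0 = e) (hmt : m t = 0)
    (hmdec : ∀ s, s < t → m (s + 1) < m s)
    (hNPg : HasNPVertices p g t (fun s => e - m s) (fun s => nuQ p (g.coeff (m s))))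
    (hbound : nuQ p (g.coeff 0) ≤
      nuQ p (g.coeff (m 1)) / ((e : ℚ) - (m 1 : ℚ)) * (2 * (e : ℚ) - 1)) :
    (∀ n : ℕ, 1 ≤ n →
      (numFactors (polyIter g n) : ℤ) ≤ padicValRat p (g.coeff 0)) ∧
    ∃ C : ℕ, ∀ n : ℕ, 1 ≤ n → numFactors (polyIter g n) ≤ C := by
  haveI : Fact p.Prime := ⟨hp⟩
  clear hNPg hbound hm0 hmt hmdec
  set r := padicValRat p (g.coeff 0) with hrdef
  have hr1 : 1 ≤ r := hbi 0 (by omega) hb0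
  have hg0 : g ≠ 0 := fun h => hb0 (by simp [h])
  have hlcg : g.leadingCoeff = g.coeff e := by rw [Polynomial.leadingCoeff, hge]
  have hlcg0 : g.leadingCoeff ≠ 0 := Polynomial.leadingCoeff_ne_zero.mpr hg0
  have hdeg : ∀ n, (polyIter g n).natDegree = e ^ n := by
    intro n
    induction n with
    | zero => simp [polyIter]
    | succ k ih =>
      show (g.comp (polyIter g k)).natDegree = e ^ (k + 1)
      rw [Polynomial.natDegree_comp, hge, ih, pow_succ, mul_comm]
  have hPne : ∀ n, polyIter g n ≠ 0 := by
    intro n h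
    have h2 := hdeg n
    rw [h, Polynomial.natDegree_zero] at h2
    have : e ^ n ≠ 0 := by positivity
    omega
  have hlc : ∀ n, (polyIter g n).leadingCoeff ≠ 0 ∧
      padicValRat p (polyIter g n).leadingCoeff = 0 := by
    intro n
    induction n with
    | zero => simp [polyIter]
    | succ k ih =>
      have hdk : (polyIter g k).natDegree ≠ 0 := by
        rw [hdeg]; positivity
      have hcomp : (polyIter g (k + 1)).leadingCoeff =
          g.leadingCoeff * (polyIter g k).leadingCoeff ^ g.natDegree := by
        show (g.comp (polyIter g k)).leadingCoeff = _
        exact Polynomial.leadingCoeff_comp hdk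
      constructor
      · rw [hcomp]; exact mul_ne_zero hlcg0 (pow_ne_zero _ ih.1)
      · rw [hcomp, padicValRat.mul hlcg0 (pow_ne_zero _ ih.1),
          padicValRat.pow _, ih.2, hlcg, hbe]
        ring
  suffices H : ∀ n : ℕ, 1 ≤ n → (numFactors (polyIter g n) : ℤ) ≤ r by
    refine ⟨H, ⟨r.toNat, fun n hn => ?_⟩⟩
    have := H n hn
    omega
  rcases eq_or_lt_of_le he1 with he | he2
  · -- e = 1 : the iterates are linear, hence irreducible
    intro n hn
    have hdegn : (polyIter g n).natDegree = 1 := by rw [hdeg, ← he, one_pow]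
    have hirr : Irreducible (polyIter g n) :=
      Polynomial.irreducible_of_degree_eq_one
        (by rw [Polynomial.degree_eq_natDegree (hPne n), hdegn]; norm_cast)
    obtain ⟨q, _, hfq⟩ := prime_factors_irreducible hirr
      ⟨fun b hb => UniqueFactorizationMonoid.prime_of_factor b hb,
        UniqueFactorizationMonoid.factors_prod (hPne n)⟩
    have : numFactors (polyIter g n) = 1 := by
      simp [numFactors, hfq]
    omega
  · -- e ≥ 2
    have key : ∀ a : ℚ, a ≠ 0 → padicValRat p a = r →
        g.eval a ≠ 0 ∧ padicValRat p (g.eval a) = r := by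
      intro a ha hva
      have heval : g.eval a = (∑ i ∈ Finset.range e, g.coeff (i + 1) * a ^ (i + 1)) + g.coeff 0 := by
        conv_lhs => rw [Polynomial.eval_eq_sum_range, hge, Finset.sum_range_succ']
        simp
      set S := ∑ i ∈ Finset.range e, g.coeff (i + 1) * a ^ (i + 1) with hSdef
      have hS : S ≠ 0 → r < padicValRat p S := by
        intro h
        refine val_sum_lt r _ _ ?_ h
        intro i hi hne
        have hco : g.coeff (i + 1) ≠ 0 := fun h0 => hne (by rw [h0, zero_mul])
        have hterm : padicValRat p (g.coeff (i + 1) * a ^ (i + 1)) =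
            padicValRat p (g.coeff (i + 1)) + (i + 1 : ℕ) * r := by
          rw [padicValRat.mul hco (pow_ne_zero _ ha), padicValRat.pow _, hva]
        rw [hterm]
        have hie : i + 1 ≤ e := Finset.mem_range.mp hi
        rcases eq_or_lt_of_le hie with hie1 | hie2
        · rw [hie1, hbe]
          have h2 : (2 : ℤ) ≤ (e : ℤ) := by exact_mod_cast he2
          nlinarith
        · have h1 : 1 ≤ padicValRat p (g.coeff (i + 1)) := hbi (i + 1) hie2 hco
          have h2 : (1 : ℤ) ≤ (i + 1 : ℕ) := by exact_mod_cast Nat.succ_le_succ (Nat.zero_le i)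
          nlinarith
      by_cases hS0 : S = 0
      · rw [heval, hS0, zero_add]
        exact ⟨hb0, rfl⟩
      · have hlt := hS hS0
        have hne : S + g.coeff 0 ≠ 0 := by
          intro h0
          have hSe : S = -g.coeff 0 := by linarith
          rw [hSe, padicValRat.neg] at hlt
          omega
        constructor
        · rw [heval]; exact hne
        · rw [heval, add_comm]
          exact padicValRat.add_eq_of_lt (by rwa [add_comm]) hb0 hS0 hlt
    -- valuation of the critical orbit
    have hval0 : ∀ n : ℕ, 1 ≤ n →
        (polyIter g n).eval 0 ≠ 0 ∧ padicValRat p ((polyIter g n).eval 0) = r := by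
      intro n hn
      induction n with
      | zero => omega
      | succ k ih =>
        have hstep : (polyIter g (k + 1)).eval 0 = g.eval ((polyIter g k).eval 0) := by
          show (g.comp (polyIter g k)).eval 0 = _
          rw [Polynomial.eval_comp]
        rcases Nat.eq_zero_or_pos k with hk | hk
        · subst hk
          rw [hstep]
          have h0 : (polyIter g 0).eval 0 = 0 := by
            show Polynomial.X.eval 0 = 0
            simp
          rw [h0, ← Polynomial.coeff_zero_eq_eval_zero]
          exact ⟨hb0, hrdef.symm⟩
        · obtain ⟨h1, h2⟩ := ih hk
          rw [hstep]
          exact key _ h1 h2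
    -- the p-adic integer model of g
    have hι_inj : Function.Injective (algebraMap ℤ_[p] ℚ_[p]) := by
      intro a b hab
      rw [PadicInt.algebraMap_apply, PadicInt.algebraMap_apply] at hab
      exact PadicInt.ext hab
    have hc_inj : Function.Injective (Rat.castHom ℚ_[p]) := (Rat.castHom ℚ_[p]).injective
    have hker : ∀ z : ℤ_[p], PadicInt.toZMod z = 0 ↔ ‖z‖ < 1 := by
      intro z
      rw [← RingHom.mem_ker, PadicInt.ker_toZMod, IsLocalRing.mem_maximalIdeal,
        mem_nonunits_iff, PadicInt.not_isUnit_iff]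
    have hcoeffg : ∀ i, ‖((g.coeff i : ℚ) : ℚ_[p])‖ ≤ 1 := by
      intro i
      by_cases h0 : g.coeff i = 0
      · simp [h0]
      · apply normCast_le_one
        rcases lt_trichotomy i e with h | h | h
        · have := hbi i h h0; omega
        · rw [h, hbe]
        · exfalso
          exact h0 (Polynomial.coeff_eq_zero_of_natDegree_lt (by rw [hge]; exact h))
    set zf : ℕ → ℤ_[p] := fun i => ⟨((g.coeff i : ℚ) : ℚ_[p]), hcoeffg i⟩ with hzf
    set g₀ : Polynomial ℤ_[p] := ∑ i ∈ Finset.range (e + 1), Polynomial.C (zf i) * Polynomial.X ^ i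
      with hg₀
    have hg₀coeff : ∀ j, g₀.coeff j = if j < e + 1 then zf j else 0 := by
      intro j
      rw [hg₀, Polynomial.finset_sum_coeff]
      simp only [Polynomial.coeff_C_mul, Polynomial.coeff_X_pow, mul_ite, mul_one, mul_zero]
      rw [Finset.sum_ite_eq (Finset.range (e + 1)) j zf]
      simp [Finset.mem_range]
    have hg₀map : g₀.map (algebraMap ℤ_[p] ℚ_[p]) = g.map (Rat.castHom ℚ_[p]) := by
      ext j
      rw [Polynomial.coeff_map, Polynomial.coeff_map, hg₀coeff]
      by_cases hj : j < e + 1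
      · rw [if_pos hj]; rfl
      · rw [if_neg hj, map_zero]
        have : g.coeff j = 0 :=
          Polynomial.coeff_eq_zero_of_natDegree_lt (by rw [hge]; omega)
        rw [this]
        simp
    have hzf0 : ∀ i, g.coeff i = 0 → zf i = 0 := by
      intro i h
      rw [hzf]
      apply Subtype.ext
      simp [h]
    have hg₀red : g₀.map PadicInt.toZMod = Polynomial.C (PadicInt.toZMod (zf e)) *
        Polynomial.X ^ e := by
      rw [hg₀, Polynomial.map_sum]
      have hterm : ∀ i, (Polynomial.C (zf i) * Polynomial.X ^ i).map PadicInt.toZMod =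
          Polynomial.C (PadicInt.toZMod (zf i)) * Polynomial.X ^ i := by
        intro i
        rw [Polynomial.map_mul, Polynomial.map_C, Polynomial.map_pow, Polynomial.map_X]
      rw [Finset.sum_congr rfl fun i _ => hterm i, Finset.sum_range_succ]
      have hzero : ∀ i ∈ Finset.range e, Polynomial.C (PadicInt.toZMod (zf i)) *
          Polynomial.X ^ i = 0 := by
        intro i hi
        have hie : i < e := Finset.mem_range.mp hi
        have : PadicInt.toZMod (zf i) = 0 := by
          by_cases h0 : g.coeff i = 0
          · rw [hzf0 i h0, map_zero]
          · rw [hker]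
            show ‖((g.coeff i : ℚ) : ℚ_[p])‖ < 1
            exact (normCast_lt_one h0).mpr (hbi i hie h0)
        rw [this, Polynomial.C_0, zero_mul]
      rw [Finset.sum_eq_zero hzero, zero_add]
    have hψe : PadicInt.toZMod (zf e) ≠ 0 := by
      intro h0
      rw [hker] at h0
      have : ‖((g.coeff e : ℚ) : ℚ_[p])‖ = 1 := normCast_eq_one (hlcg ▸ hlcg0) hbe
      rw [show ‖zf e‖ = ‖((g.coeff e : ℚ) : ℚ_[p])‖ from rfl, this] at h0
      exact lt_irrefl _ h0
    -- the per-iterate argument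
    intro n hn
    set P := polyIter g n with hPdef
    set G := iterP g₀ n with hGdef
    set N := e ^ n with hNdef
    have hN1 : 1 ≤ N := Nat.one_le_pow n e (by omega)
    have hGmap : G.map (algebraMap ℤ_[p] ℚ_[p]) = P.map (Rat.castHom ℚ_[p]) := by
      rw [hGdef, iterP_map, hg₀map, hPdef, polyIter_eq, iterP_map]
    obtain ⟨v, hv0, hGred⟩ : ∃ v : ZMod p, v ≠ 0 ∧
        G.map PadicInt.toZMod = Polynomial.C v * Polynomial.X ^ N := by
      rw [hGdef, iterP_map, hg₀red]
      exact iterP_CX _ hψe e n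
    have hP0 : P ≠ 0 := hPne n
    have hPKdeg : (P.map (Rat.castHom ℚ_[p])).natDegree = N := by
      rw [Polynomial.natDegree_map_eq_of_injective hc_inj, hPdef, hdeg]
    have hGdeg : G.natDegree = N := by
      rw [← Polynomial.natDegree_map_eq_of_injective hι_inj G, hGmap, hPKdeg]
    have hGlc : (algebraMap ℤ_[p] ℚ_[p]) G.leadingCoeff = ((P.leadingCoeff : ℚ) : ℚ_[p]) := by
      rw [← Polynomial.leadingCoeff_map_of_injective hι_inj, hGmap, Polynomial.leadingCoeff_map_of_injective hc_inj]
      rfl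
    have hGlcu : IsUnit G.leadingCoeff := by
      rw [PadicInt.isUnit_iff]
      rw [show ‖G.leadingCoeff‖ = ‖(algebraMap ℤ_[p] ℚ_[p]) G.leadingCoeff‖ from rfl, hGlc]
      exact normCast_eq_one (hlc n).1 (hlc n).2
    set w : ℤ_[p] := ((hGlcu.unit⁻¹ : ℤ_[p]ˣ) : ℤ_[p]) with hwdef
    have hw : G.leadingCoeff * w = 1 := by
      rw [hwdef]
      exact hGlcu.mul_val_inv
    have hw0 : w ≠ 0 := Units.ne_zero _
    have hG0 : G ≠ 0 := fun h => by
      rw [h, Polynomial.leadingCoeff_zero] at hw; simp at hw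
    set Pm : Polynomial ℤ_[p] := G * Polynomial.C w with hPm
    have hPmm : Pm.Monic := by
      show Pm.leadingCoeff = 1
      rw [hPm, Polynomial.leadingCoeff_mul' (by rw [Polynomial.leadingCoeff_C, hw]; exact one_ne_zero),
        Polynomial.leadingCoeff_C, hw]
    have hPmred : Pm.map PadicInt.toZMod = Polynomial.X ^ N := by
      have h1 : Pm.map PadicInt.toZMod =
          Polynomial.C (v * PadicInt.toZMod w) * Polynomial.X ^ N := by
        rw [hPm, Polynomial.map_mul, hGred, Polynomial.map_C, Polynomial.C_mul]
        ring
      have hmon : (Pm.map PadicInt.toZMod).Monic := hPmm.map PadicInt.toZMod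
      have hlcc : v * PadicInt.toZMod w = 1 := by
        have := hmon
        rw [h1] at this
        have h2 := this
        rwa [Polynomial.Monic, Polynomial.leadingCoeff_C_mul_X_pow] at h2
      rw [h1, hlcc, Polynomial.C_1, one_mul]
    have hPmmap : Pm.map (algebraMap ℤ_[p] ℚ_[p]) =
        (P.map (Rat.castHom ℚ_[p])) * Polynomial.C ((algebraMap ℤ_[p] ℚ_[p]) w) := by
      rw [hPm, Polynomial.map_mul, hGmap, Polynomial.map_C]
    -- per-factor estimate
    have hfac : ∀ q ∈ UniqueFactorizationMonoid.factors P, q.eval 0 ≠ 0 ∧ q.leadingCoeff ≠ 0 ∧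
        1 ≤ padicValRat p (q.eval 0) - padicValRat p q.leadingCoeff := by
      intro q hq
      have hqirr : Irreducible q := UniqueFactorizationMonoid.irreducible_of_factor q hq
      have hqdvd : q ∣ P := UniqueFactorizationMonoid.dvd_of_mem_factors hq
      have hq0 : q ≠ 0 := hqirr.ne_zero
      have hqlc : q.leadingCoeff ≠ 0 := Polynomial.leadingCoeff_ne_zero.mpr hq0
      have hPe0 : P.eval 0 ≠ 0 := (hval0 n hn).1
      obtain ⟨b, hb⟩ := hqdvd
      have hqe0 : q.eval 0 ≠ 0 := by
        intro h0
        apply hPe0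
        rw [hb, Polynomial.eval_mul, h0, zero_mul]
      refine ⟨hqe0, hqlc, ?_⟩
      set qm : Polynomial ℚ := q * Polynomial.C q.leadingCoeff⁻¹ with hqmdef
      have hqmm : qm.Monic := Polynomial.monic_mul_leadingCoeff_inv hq0
      have hqmdvd : qm ∣ P := by
        refine dvd_trans ⟨Polynomial.C q.leadingCoeff, ?_⟩ ⟨b, hb⟩
        rw [hqmdef, mul_assoc, ← Polynomial.C_mul, inv_mul_cancel₀ hqlc, Polynomial.C_1, mul_one]
      have h2 : qm.map (Rat.castHom ℚ_[p]) ∣ Pm.map (algebraMap ℤ_[p] ℚ_[p]) := by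
        rw [hPmmap]
        exact Dvd.dvd.mul_right (Polynomial.map_dvd _ hqmdvd) _
      obtain ⟨f', hf'⟩ := IsIntegrallyClosed.eq_map_mul_C_of_dvd ℚ_[p] hPmm h2
      have hqmK : (qm.map (Rat.castHom ℚ_[p])).Monic := hqmm.map _
      rw [hqmK.leadingCoeff, Polynomial.C_1, mul_one] at hf'
      have hf'm : f'.Monic := by
        have h3 : (algebraMap ℤ_[p] ℚ_[p]) f'.leadingCoeff = 1 := by
          rw [← Polynomial.leadingCoeff_map_of_injective hι_inj, hf']
          exact hqmK
        have : f'.leadingCoeff = 1 := hι_inj (by rw [h3, map_one])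
        exact this
      have hf'dvd : f' ∣ Pm :=
        hPmm.dvd_of_fraction_map_dvd_fraction_map hf'm (by rw [hf']; exact h2)
      have hred : f'.map PadicInt.toZMod ∣ Polynomial.X ^ N := by
        rw [← hPmred]
        exact Polynomial.map_dvd _ hf'dvd
      have hqdegpos : 0 < q.natDegree :=
        Polynomial.natDegree_pos_iff_degree_pos.mpr (Polynomial.degree_pos_of_irreducible hqirr)
      have hf'deg : f'.natDegree = q.natDegree := by
        rw [← Polynomial.natDegree_map_eq_of_injective hι_inj f', hf',
          Polynomial.natDegree_map_eq_of_injective hc_inj, hqmdef,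
          Polynomial.natDegree_mul_C (inv_ne_zero hqlc)]
      have hXdvd : Polynomial.X ∣ f'.map PadicInt.toZMod := by
        have hmon : (f'.map PadicInt.toZMod).Monic := hf'm.map _
        have hne : f'.map PadicInt.toZMod ≠ 0 := hmon.ne_zero
        have hdpos : 0 < (f'.map PadicInt.toZMod).natDegree := by
          rw [hf'm.natDegree_map]
          omega
        obtain ⟨i, hiirr, hidvd⟩ := WfDvdMonoid.exists_irreducible_factor
          (Polynomial.not_isUnit_of_natDegree_pos _ hdpos) hne
        have hiX : i ∣ Polynomial.X :=
          (UniqueFactorizationMonoid.irreducible_iff_prime.mp hiirr).dvd_of_dvd_pow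
            (hidvd.trans hred)
        obtain ⟨u, hu⟩ := hiX
        have huu : IsUnit u := (Polynomial.irreducible_X.isUnit_or_isUnit hu).resolve_left hiirr.1
        obtain ⟨uu, rfl⟩ := huu
        have hXi : Polynomial.X * ((uu⁻¹ : (ZMod p)[X]ˣ) : (ZMod p)[X]) = i := by
          rw [hu, mul_assoc]
          simp
        exact dvd_trans ⟨_, hXi.symm⟩ hidvd
      have h5 : PadicInt.toZMod (f'.coeff 0) = 0 := by
        have := Polynomial.X_dvd_iff.mp hXdvd
        rwa [Polynomial.coeff_map] at this
      have h6 : ‖f'.coeff 0‖ < 1 := (hker _).mp h5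
      have h7 : (algebraMap ℤ_[p] ℚ_[p]) (f'.coeff 0) = ((qm.coeff 0 : ℚ) : ℚ_[p]) := by
        rw [← Polynomial.coeff_map, hf', Polynomial.coeff_map]
        rfl
      have h8 : ‖((qm.coeff 0 : ℚ) : ℚ_[p])‖ < 1 := by
        rw [← h7]
        exact h6
      have hqm0 : qm.coeff 0 = q.coeff 0 * q.leadingCoeff⁻¹ := by
        rw [hqmdef, Polynomial.coeff_mul_C]
      have hq00 : q.coeff 0 ≠ 0 := by rwa [Polynomial.coeff_zero_eq_eval_zero]
      have hqm0ne : qm.coeff 0 ≠ 0 := by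
        rw [hqm0]
        exact mul_ne_zero hq00 (inv_ne_zero hqlc)
      have h9 : 1 ≤ padicValRat p (qm.coeff 0) := (normCast_lt_one hqm0ne).mp h8
      rw [hqm0, padicValRat.mul hq00 (inv_ne_zero hqlc), padicValRat.inv] at h9
      rw [← Polynomial.coeff_zero_eq_eval_zero]
      omega
    -- assemble
    obtain ⟨u, hu⟩ := (UniqueFactorizationMonoid.factors_prod hP0)
    obtain ⟨cu, hcuu, hcu⟩ := Polynomial.isUnit_iff.mp u.isUnit
    have hcu0 : cu ≠ 0 := hcuu.ne_zero
    set M := UniqueFactorizationMonoid.factors P with hM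
    have hev : ((M.map fun q => q.eval 0).prod) * cu = P.eval 0 := by
      rw [← hu, Polynomial.eval_mul, ← Polynomial.eval_multiset_prod, ← hcu, Polynomial.eval_C]
    have hlcprod : ((M.map fun q => q.leadingCoeff).prod) * cu = P.leadingCoeff := by
      rw [← hu, Polynomial.leadingCoeff_mul, Polynomial.leadingCoeff_multiset_prod, ← hcu,
        Polynomial.leadingCoeff_C]
    have hall0 : ∀ x ∈ M.map (fun q => q.eval 0), x ≠ 0 := by
      intro x hx
      obtain ⟨q, hq, rfl⟩ := Multiset.mem_map.mp hx
      exact (hfac q hq).1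
    have halllc : ∀ x ∈ M.map (fun q => q.leadingCoeff), x ≠ 0 := by
      intro x hx
      obtain ⟨q, hq, rfl⟩ := Multiset.mem_map.mp hx
      exact (hfac q hq).2.1
    obtain ⟨hprod0, hsum0⟩ := val_prod (p := p) _ hall0
    obtain ⟨hprodlc, hsumlc⟩ := val_prod (p := p) _ halllc
    have hv1 : padicValRat p (P.eval 0) =
        ((M.map fun q => q.eval 0).map (padicValRat p)).sum + padicValRat p cu := by
      rw [← hev, padicValRat.mul hprod0 hcu0, hsum0]
    have hv2 : padicValRat p P.leadingCoeff =
        ((M.map fun q => q.leadingCoeff).map (padicValRat p)).sum + padicValRat p cu := by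
      rw [← hlcprod, padicValRat.mul hprodlc hcu0, hsumlc]
    rw [Multiset.map_map] at hv1 hv2
    simp only [Function.comp] at hv1 hv2
    have hcard : (M.card : ℤ) ≤
        (M.map fun q => padicValRat p (q.eval 0) - padicValRat p q.leadingCoeff).sum := by
      have h1 := Multiset.card_nsmul_le_sum
        (s := M.map fun q => padicValRat p (q.eval 0) - padicValRat p q.leadingCoeff)
        (a := (1 : ℤ)) ?_
      · rwa [Multiset.card_map, nsmul_eq_mul, mul_one] at h1
      · intro x hx
        obtain ⟨q, hq, rfl⟩ := Multiset.mem_map.mp hx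
        exact (hfac q hq).2.2
    rw [multiset_sum_map_sub] at hcard
    have hre : padicValRat p (P.eval 0) = r := (hval0 n hn).2
    have hlce : padicValRat p P.leadingCoeff = 0 := (hlc n).2
    have : (numFactors P : ℤ) = (M.card : ℤ) := by rw [numFactors, hM]
    rw [this]
    have hcomp : ((M.map fun q => padicValRat p (q.eval 0)).sum : ℤ) -
        (M.map fun q => padicValRat p q.leadingCoeff).sum = r := by
      have := hv1
      have := hv2
      omega
    omega
end
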